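/- arXiv:0805.3856 — 4 statements merged into one kernel-verified Lean document; each statement's English description precedes it below -/
import Mathlib

section
/- Fix an integer l ≥ 1 and let u(t) = (x − t² − tl)^l for a large real parameter x. Then ∫_0^{√x} u(t) dt = ((l!)²·2^{2l}/(2l+1)!)·x^{l+1/2} − (l/2)·x^l + O(x^{l−1/2}), where the implied constant depends only on l. -/
open Finset Real MeasureTheory intervalIntegral


lemma sum_inv_identity (n : ℕ) : ∀ x : ℝ, 0 < x →
    ∑ k ∈ range (n+1), (-1:ℝ)^k * (n.choose k : ℝ) / (x + k)
      = (n.factorial : ℝ) / ∏ i ∈ range (n+1), (x + i) := by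
  induction n with
  | zero => intro x hx; simp
  | succ n ih =>
    intro x hx
    have hpos : ∀ m : ℕ, (0:ℝ) < ∏ i ∈ range m, (x + i) := fun m =>
      Finset.prod_pos (fun i _ => by positivity)
    have hpos' : (0:ℝ) < ∏ i ∈ range (n+1), ((x+1) + i) :=
      Finset.prod_pos (fun i _ => by positivity)
    have key : ∑ k ∈ range (n+2), (-1:ℝ)^k * ((n+1).choose k : ℝ) / (x + k)
        = (∑ k ∈ range (n+1), (-1:ℝ)^k * (n.choose k : ℝ) / (x + k))
          - ∑ k ∈ range (n+1), (-1:ℝ)^k * (n.choose k : ℝ) / ((x+1) + k) := by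
      rw [Finset.sum_range_succ' (fun k => (-1:ℝ)^k * ((n+1).choose k : ℝ) / (x + k))]
      have : ∀ j ∈ range (n+1), (-1:ℝ)^(j+1) * ((n+1).choose (j+1) : ℝ) / (x + (j+1))
          = (-1:ℝ)^(j+1) * (n.choose (j+1) : ℝ) / (x + (j+1))
            - (-1:ℝ)^j * (n.choose j : ℝ) / ((x+1) + j) := by
        intro j _
        rw [Nat.choose_succ_succ]
        push_cast
        ring
      push_cast
      rw [Finset.sum_congr rfl this, Finset.sum_sub_distrib]
      have h2 : ∑ j ∈ range (n+1), (-1:ℝ)^(j+1) * (n.choose (j+1) : ℝ) / (x + (j+1))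
            + (-1:ℝ)^0 * ((n+1).choose 0 : ℝ) / (x + (0:ℕ))
          = ∑ k ∈ range (n+1), (-1:ℝ)^k * (n.choose k : ℝ) / (x + k) := by
        rw [Finset.sum_range_succ,
          Finset.sum_range_succ' (fun k => (-1:ℝ)^k * (n.choose k : ℝ) / (x + k)) n]
        simp only [Nat.choose_succ_self, Nat.choose_zero_right, Nat.cast_zero, mul_zero,
          zero_div, add_zero, Nat.cast_one, mul_one, Nat.cast_one]
        push_cast
        ring
      linarith [h2]
    rw [key, ih x hx, ih (x+1) (by linarith)]
    have hP : (∏ i ∈ range (n+2), (x + i)) = (∏ i ∈ range (n+1), (x + i)) * (x + (n+1)) := by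
      rw [Finset.prod_range_succ]; push_cast; ring
    have hQ : (∏ i ∈ range (n+2), (x + i)) = x * ∏ i ∈ range (n+1), ((x+1) + i) := by
      rw [Finset.prod_range_succ' (fun i => x + (i:ℝ)) (n+1)]
      simp only [Nat.cast_zero, add_zero]
      rw [mul_comm]
      congr 1
      exact Finset.prod_congr rfl (fun i _ => by push_cast; ring)
    rw [div_sub_div _ _ (ne_of_gt (hpos (n+1))) (ne_of_gt hpos')]
    rw [div_eq_div_iff (by positivity) (ne_of_gt (hpos (n+2)))]
    rw [hP]
    have : ∏ i ∈ range (n + 1), ((x+1) + i) = (∏ i ∈ range (n+1), (x+i)) * (x + (n+1)) / x := by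
      field_simp
      rw [← hP, hQ]
    rw [this]
    have hx' : x ≠ 0 := ne_of_gt hx
    field_simp
    push_cast [Nat.factorial_succ]
    ring

lemma prod_two_mul_add_one (m : ℕ) :
    (∏ i ∈ range m, (2*i+1)) * (2^m * m.factorial) = (2*m).factorial := by
  induction m with
  | zero => simp
  | succ m ih =>
    rw [Finset.prod_range_succ]
    have h2 : 2*(m+1) = (2*m+1)+1 := by ring
    rw [h2, Nat.factorial_succ, Nat.factorial_succ, Nat.factorial_succ, ← ih]
    ring

lemma S_eq (l : ℕ) : ∑ k ∈ range (l+1), (-1:ℝ)^k * (l.choose k : ℝ) / (2*k+1)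
    = (l.factorial : ℝ)^2 * 2^(2*l) / ((2*l+1).factorial : ℝ) := by
  have h := sum_inv_identity l (1/2) one_half_pos
  have hL : ∑ k ∈ range (l+1), (-1:ℝ)^k * (l.choose k : ℝ) / (2*k+1)
      = (1/2) * ∑ k ∈ range (l+1), (-1:ℝ)^k * (l.choose k : ℝ) / ((1:ℝ)/2 + k) := by
    rw [Finset.mul_sum]
    refine Finset.sum_congr rfl (fun k _ => ?_)
    have h1 : (2*(k:ℝ)+1) ≠ 0 := by positivity
    have h2 : ((1:ℝ)/2 + k) ≠ 0 := by positivity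
    field_simp
    ring
  have h2exp : (2:ℝ)^(l+1) = ∏ _i ∈ range (l+1), (2:ℝ) := by
    simp [Finset.prod_const, Finset.card_range]
  have hprod : ∏ i ∈ range (l+1), ((1:ℝ)/2 + i)
      = (∏ i ∈ range (l+1), (2*(i:ℝ)+1)) / 2^(l+1) := by
    rw [eq_div_iff (by positivity), h2exp, ← Finset.prod_mul_distrib]
    exact Finset.prod_congr rfl (fun i _ => by ring)
  have hP : (0:ℝ) < ∏ i ∈ range (l+1), (2*(i:ℝ)+1) :=
    Finset.prod_pos (fun i _ => by positivity)
  have hnat : (∏ i ∈ range (l+1), (2*(i:ℝ)+1)) * (2^(l+1) * ((l+1).factorial : ℝ))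
      = ((2*(l+1)).factorial : ℝ) := by
    have := prod_two_mul_add_one (l+1)
    exact_mod_cast congrArg (Nat.cast : ℕ → ℝ) this
  have h1 : ((2*(l+1)).factorial : ℝ) = (2*(l:ℝ)+2) * ((2*l+1).factorial : ℝ) := by
    have h3 : 2*(l+1) = (2*l+1)+1 := by ring
    rw [h3, Nat.factorial_succ]; push_cast; ring
  have h4 : ((l+1).factorial : ℝ) = ((l:ℝ)+1) * (l.factorial : ℝ) := by
    rw [Nat.factorial_succ]; push_cast; ring
  rw [h1, h4] at hnat
  have hPval : (∏ i ∈ range (l+1), (2*(i:ℝ)+1))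
      = ((2*(l:ℝ)+2) * ((2*l+1).factorial : ℝ)) / (2^(l+1) * (((l:ℝ)+1) * (l.factorial:ℝ))) := by
    rw [eq_div_iff (by positivity)]
    linear_combination hnat
  rw [hL, h, hprod, hPval]
  have hf : (0:ℝ) < ((2*l+1).factorial : ℝ) := by positivity
  field_simp
  ring

lemma T_eq (n : ℕ) : ∑ k ∈ range (n+1), (-1:ℝ)^k * (n.choose k : ℝ) / ((k:ℝ)+1)
    = 1/((n:ℝ)+1) := by
  have h := sum_inv_identity n 1 one_pos
  have e1 : ∑ k ∈ range (n+1), (-1:ℝ)^k * (n.choose k : ℝ) / ((k:ℝ)+1)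
      = ∑ k ∈ range (n+1), (-1:ℝ)^k * (n.choose k : ℝ) / ((1:ℝ)+k) :=
    Finset.sum_congr rfl (fun k _ => by rw [add_comm])
  have e2 : ∏ i ∈ range (n+1), ((1:ℝ)+i) = ((n+1).factorial : ℝ) := by
    rw [← Finset.prod_range_add_one_eq_factorial]
    push_cast
    exact Finset.prod_congr rfl (fun i _ => by ring)
  rw [e1, h, e2, Nat.factorial_succ]
  have h0 : (n.factorial : ℝ) ≠ 0 := by positivity
  push_cast
  field_simp

lemma myIntegralOne (l : ℕ) {x : ℝ} (hx : 0 ≤ x) :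
    ∫ t in (0:ℝ)..Real.sqrt x, (x - t^2)^l
      = (∑ k ∈ range (l+1), (-1:ℝ)^k * (l.choose k : ℝ) / (2*k+1)) * (x^l * Real.sqrt x) := by
  have hint : ∀ t : ℝ, (x - t^2)^l
      = ∑ k ∈ range (l+1), ((-1:ℝ)^k * x^(l-k) * (l.choose k : ℝ)) * t^(2*k) := by
    intro t
    have h1 : x - t^2 = (-(t^2)) + x := by ring
    rw [h1, add_pow]
    refine Finset.sum_congr rfl (fun k _ => ?_)
    rw [neg_pow, ← pow_mul]
    ring
  simp_rw [hint]
  rw [intervalIntegral.integral_finset_sum]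
  · rw [Finset.sum_mul]
    refine Finset.sum_congr rfl (fun k hk => ?_)
    rw [intervalIntegral.integral_const_mul, integral_pow]
    have hsq : Real.sqrt x ^ (2*k+1) = x^k * Real.sqrt x := by
      rw [pow_succ, pow_mul, Real.sq_sqrt hx]
    have hk' : k ≤ l := by simpa using Nat.lt_succ_iff.mp (Finset.mem_range.mp hk)
    have hxp : x^(l-k) * x^k = x^l := pow_sub_mul_pow x hk'
    rw [hsq]
    rw [show ((0:ℝ)^(2*k+1)) = 0 by simp]
    have hne : (2*(k:ℝ)+1) ≠ 0 := by positivity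
    push_cast
    field_simp
    linear_combination ((l.choose k : ℝ) * Real.sqrt x) * hxp
  · intro k _
    apply Continuous.intervalIntegrable
    continuity

lemma myIntegralTwo (l : ℕ) (hl : 1 ≤ l) {x : ℝ} (hx : 0 ≤ x) :
    ∫ t in (0:ℝ)..Real.sqrt x, t * (x - t^2)^(l-1) = x^l / (2*l) := by
  have hl0 : ((l:ℝ)) ≠ 0 := by positivity
  have hderiv : ∀ t ∈ Set.uIcc (0:ℝ) (Real.sqrt x),
      HasDerivAt (fun t : ℝ => -(x - t^2)^l / (2*l)) (t * (x - t^2)^(l-1)) t := by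
    intro t _
    have h1 : HasDerivAt (fun t : ℝ => x - t^2) (-(2*t)) t := by
      simpa using ((hasDerivAt_pow 2 t).const_sub x)
    have h2 := (h1.pow l).div_const (2*l)
    have h3 := h2.neg
    convert h3 using 1
    · rfl
    · rfl
    · ext s; simp only [Pi.neg_apply, Pi.pow_apply]; ring
    · field_simp
  rw [intervalIntegral.integral_eq_sub_of_hasDerivAt hderiv
      (by apply Continuous.intervalIntegrable; continuity)]
  rw [Real.sq_sqrt hx]
  simp only [sub_self]
  rw [zero_pow (by omega)]
  ring

set_option maxHeartbeats 1000000 in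
/-- `∫_0^{√x} (x − t² − tl)^l dt = ((l!)² 2^{2l}/(2l+1)!) x^{l+1/2} − (l/2) x^l + O(x^{l−1/2})`. -/
theorem integral_u_asymptotic (l : ℕ) (hl : 1 ≤ l) :
    ∃ C x₀ : ℝ, 0 < C ∧ 1 ≤ x₀ ∧ ∀ x : ℝ, x₀ ≤ x →
      |(∫ t in (0:ℝ)..Real.sqrt x, (x - t ^ 2 - t * l) ^ l) -
        (((l.factorial : ℝ) ^ 2 * 2 ^ (2 * l) / ((2 * l + 1).factorial : ℝ)) *
            x ^ ((l : ℝ) + 1/2) - (l / 2 : ℝ) * x ^ (l : ℕ))|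
        ≤ C * x ^ ((l : ℝ) - 1/2) := by
  obtain ⟨n, rfl⟩ : ∃ n, l = n + 1 := ⟨l - 1, (Nat.succ_pred_eq_of_pos hl).symm⟩
  refine ⟨((n:ℝ)+2)^(n+1), 1, by positivity, le_refl 1, ?_⟩
  intro x hx
  have hx0 : (0:ℝ) < x := lt_of_lt_of_le one_pos hx
  have hx0' : (0:ℝ) ≤ x := hx0.le
  have hsn : (0:ℝ) ≤ Real.sqrt x := Real.sqrt_nonneg x
  have hss : Real.sqrt x ≤ x := by
    calc Real.sqrt x ≤ Real.sqrt (x^2) := Real.sqrt_le_sqrt (by nlinarith)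
    _ = x := Real.sqrt_sq hx0'
  set s := Real.sqrt x with hsdef
  set g : ℝ → ℝ := fun t =>
    ∑ k ∈ range n, (x - t^2)^k * (-(t*((n+1:ℕ):ℝ)))^(n+1-k) * (((n+1).choose k : ℕ) : ℝ)
    with hg
  have hdecomp : ∀ t : ℝ, (x - t^2 - t*((n+1:ℕ):ℝ))^(n+1)
      = g t + ((x - t^2)^(n+1) - (((n+1:ℕ):ℝ))^2 * (t * (x - t^2)^n)) := by
    intro t
    have e : x - t^2 - t*((n+1:ℕ):ℝ) = (x - t^2) + (-(t*((n+1:ℕ):ℝ))) := by ring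
    rw [e, add_pow, Finset.sum_range_succ, Finset.sum_range_succ]
    rw [hg]
    simp only [Nat.add_sub_cancel_left, Nat.sub_self, Nat.choose_self, Nat.choose_succ_self_right,
      pow_zero, pow_one, Nat.cast_one, mul_one, Nat.cast_add, Nat.cast_one]
    push_cast
    ring
  have hgc : Continuous g := by
    apply continuous_finset_sum
    intro k _
    fun_prop
  have hi_g : IntervalIntegrable g volume 0 s := hgc.intervalIntegrable _ _
  have hi1 : IntervalIntegrable (fun t : ℝ => (x - t^2)^(n+1)) volume 0 s := by
    apply Continuous.intervalIntegrable; fun_prop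
  have hi2 : IntervalIntegrable (fun t : ℝ => (((n+1:ℕ):ℝ))^2 * (t * (x - t^2)^n)) volume 0 s := by
    apply Continuous.intervalIntegrable; fun_prop
  have split : (∫ t in (0:ℝ)..s, (x - t ^ 2 - t * ((n+1:ℕ):ℝ)) ^ (n+1))
      = (∫ t in (0:ℝ)..s, g t)
        + ((∫ t in (0:ℝ)..s, (x - t^2)^(n+1))
          - (((n+1:ℕ):ℝ))^2 * ∫ t in (0:ℝ)..s, t * (x - t^2)^n) := by
    rw [← intervalIntegral.integral_const_mul, ← intervalIntegral.integral_sub hi1 hi2,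
      ← intervalIntegral.integral_add hi_g (hi1.sub hi2)]
    exact intervalIntegral.integral_congr (fun t _ => by
      simp only [pow_two] at *
      exact hdecomp t)
  have hI1 := myIntegralOne (n+1) hx0'
  have hI2 := myIntegralTwo (n+1) (Nat.le_add_left 1 n) hx0'
  simp only [Nat.add_sub_cancel] at hI2
  have hS := S_eq (n+1)
  have hxl : x ^ (((n+1:ℕ):ℝ) + 1/2) = x^(n+1) * s := by
    rw [Real.rpow_add hx0, Real.rpow_natCast, hsdef, Real.sqrt_eq_rpow]
  have hxl2 : x ^ (((n+1:ℕ):ℝ) - 1/2) = x^n * s := by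
    have e : ((n+1:ℕ):ℝ) - 1/2 = (n:ℝ) + 1/2 := by push_cast; ring
    rw [e, Real.rpow_add hx0, Real.rpow_natCast, hsdef, Real.sqrt_eq_rpow]
  have hnne : ((n:ℝ)+1) ≠ 0 := by positivity
  have key : (∫ t in (0:ℝ)..s, (x - t ^ 2 - t * ((n+1:ℕ):ℝ)) ^ (n+1))
      - ((((n+1).factorial : ℝ) ^ 2 * 2 ^ (2 * (n+1)) / ((2 * (n+1) + 1).factorial : ℝ)) *
          x ^ (((n+1:ℕ):ℝ) + 1/2) - (((n+1:ℕ):ℝ) / 2) * x ^ (n+1))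
      = ∫ t in (0:ℝ)..s, g t := by
    rw [split, hxl, hI1, hS, hI2]
    push_cast
    field_simp
    ring
  -- pointwise bound on g
  have hptw : ∀ t ∈ Set.uIoc (0:ℝ) s, ‖g t‖ ≤ ((n:ℝ)+2)^(n+1) * x^n := by
    intro t ht
    rw [Set.uIoc_of_le hsn] at ht
    obtain ⟨ht0, hts⟩ := ht
    have ht2 : t^2 ≤ x := by
      calc t^2 ≤ s^2 := pow_le_pow_left₀ ht0.le hts 2
      _ = x := Real.sq_sqrt hx0'
    have hxt0 : (0:ℝ) ≤ x - t^2 := by linarith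
    rw [Real.norm_eq_abs, hg]
    calc |∑ k ∈ range n, (x - t^2)^k * (-(t*((n+1:ℕ):ℝ)))^(n+1-k) * (((n+1).choose k : ℕ) : ℝ)|
        ≤ ∑ k ∈ range n, |(x - t^2)^k * (-(t*((n+1:ℕ):ℝ)))^(n+1-k) * (((n+1).choose k : ℕ) : ℝ)| :=
          Finset.abs_sum_le_sum_abs _ _
      _ ≤ ∑ k ∈ range n, x^n * (((n:ℝ)+1)^(n+1-k) * (((n+1).choose k : ℕ) : ℝ)) := by
          refine Finset.sum_le_sum (fun k hk => ?_)
          have hk' : k < n := Finset.mem_range.mp hk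
          have habs : |(x - t^2)^k * (-(t*((n+1:ℕ):ℝ)))^(n+1-k) * (((n+1).choose k : ℕ) : ℝ)|
              = (x - t^2)^k * (t*((n:ℝ)+1))^(n+1-k) * (((n+1).choose k : ℕ) : ℝ) := by
            rw [abs_mul, abs_mul, abs_pow, abs_pow, abs_neg]
            rw [abs_of_nonneg hxt0, abs_of_nonneg (by positivity : (0:ℝ) ≤ t*((n+1:ℕ):ℝ)),
              abs_of_nonneg (by positivity : (0:ℝ) ≤ (((n+1).choose k : ℕ) : ℝ))]
            push_cast
            ring
          rw [habs]
          have hstep1 : (x - t^2)^k * (t*((n:ℝ)+1))^(n+1-k) * (((n+1).choose k : ℕ) : ℝ)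
              ≤ x^k * (s*((n:ℝ)+1))^(n+1-k) * (((n+1).choose k : ℕ) : ℝ) := by
            have hb : t*((n:ℝ)+1) ≤ s*((n:ℝ)+1) :=
              mul_le_mul_of_nonneg_right hts (by positivity)
            have h1 : (x - t^2)^k ≤ x^k :=
              pow_le_pow_left₀ hxt0 (by nlinarith [sq_nonneg t]) k
            have h2 : (t*((n:ℝ)+1))^(n+1-k) ≤ (s*((n:ℝ)+1))^(n+1-k) :=
              pow_le_pow_left₀ (by positivity) hb _
            exact mul_le_mul_of_nonneg_right
              (mul_le_mul h1 h2 (by positivity) (by positivity)) (by positivity)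
          refine hstep1.trans ?_
          have hspow : s^(n+1-k) ≤ x^(n-k) := by
            have hnk : n+1-k = (n-1-k)+2 := by omega
            have hnk2 : n-k = (n-1-k)+1 := by omega
            rw [hnk, hnk2, pow_add, pow_add, pow_one]
            have h1 : s^(n-1-k) ≤ x^(n-1-k) := pow_le_pow_left₀ hsn hss _
            have h2 : s^2 = x := Real.sq_sqrt hx0'
            calc s^(n-1-k) * s^2 = s^(n-1-k) * x := by rw [h2]
              _ ≤ x^(n-1-k) * x := mul_le_mul_of_nonneg_right h1 hx0'
          calc x^k * (s*((n:ℝ)+1))^(n+1-k) * (((n+1).choose k : ℕ) : ℝ)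
              = (x^k * s^(n+1-k)) * (((n:ℝ)+1)^(n+1-k) * (((n+1).choose k : ℕ) : ℝ)) := by
                rw [mul_pow]; ring
            _ ≤ (x^k * x^(n-k)) * (((n:ℝ)+1)^(n+1-k) * (((n+1).choose k : ℕ) : ℝ)) :=
                mul_le_mul_of_nonneg_right
                  (mul_le_mul_of_nonneg_left hspow (by positivity)) (by positivity)
            _ = x^n * (((n:ℝ)+1)^(n+1-k) * (((n+1).choose k : ℕ) : ℝ)) := by
                rw [pow_mul_pow_sub x (le_of_lt hk')]
      _ = x^n * ∑ k ∈ range n, (((n:ℝ)+1)^(n+1-k) * (((n+1).choose k : ℕ) : ℝ)) := by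
          rw [Finset.mul_sum]
      _ ≤ x^n * ((n:ℝ)+2)^(n+1) := by
          refine mul_le_mul_of_nonneg_left ?_ (by positivity)
          · -- sum ≤ (n+2)^(n+1)
            have e : ((n:ℝ)+2)^(n+1)
                = ∑ k ∈ range (n+2), ((n:ℝ)+1)^(n+1-k) * (((n+1).choose k : ℕ) : ℝ) := by
              rw [show ((n:ℝ)+2) = 1 + ((n:ℝ)+1) by ring, add_pow]
              simp
            rw [e]
            refine Finset.sum_le_sum_of_subset_of_nonneg ?_ ?_
            · intro k hk; simp only [Finset.mem_range] at *; omega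
            · intro k _ _; positivity
      _ = ((n:ℝ)+2)^(n+1) * x^n := by ring
  have hfinal := intervalIntegral.norm_integral_le_of_norm_le_const hptw
  rw [key, hxl2]
  rw [Real.norm_eq_abs] at hfinal
  calc |∫ t in (0:ℝ)..s, g t| ≤ ((n:ℝ)+2)^(n+1) * x^n * |s - 0| := hfinal
    _ = ((n:ℝ)+2)^(n+1) * (x^n * s) := by rw [sub_zero, abs_of_nonneg hsn]; ring
end

section
/- Fix an integer l ≥ 1. For large real x, ∑_{1 ≤ m ≤ √x} m^l·(x/(2m) − m/2 − l/2)^l = ((l!)²·2^l/(2l+1)!)·x^{l+1/2} − ((l+1)/2^{l+1})·x^l + O(x^{l−1/2}), with implied constant depending only on l. -/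
open Real Finset intervalIntegral



lemma prod_val (n : ℕ) : ∏ i ∈ range n, (2 * (i : ℝ) + 2) / (2 * i + 3)
    = 4 ^ n * (n.factorial : ℝ)^2 / ((2*n+1).factorial) := by
  induction n with
  | zero => simp
  | succ k ih =>
    have h3 : ((2*(k+1)+1).factorial : ℝ) = (2*(k:ℝ)+3)*((2*(k:ℝ)+2)*((2*k+1).factorial)) := by
      have h : 2*(k+1)+1 = ((2*k+1)+1)+1 := by ring
      rw [h, Nat.factorial_succ, Nat.factorial_succ]
      push_cast; ring
    have h5 : (((k+1)).factorial : ℝ) = ((k:ℝ)+1) * (k.factorial) := by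
      rw [Nat.factorial_succ]; push_cast; ring
    rw [prod_range_succ, ih, h3, h5]
    have h2 : ((2*k+1).factorial : ℝ) ≠ 0 := by positivity
    have h4 : ((k).factorial : ℝ) ≠ 0 := by positivity
    set a := ((2*k+1).factorial : ℝ)
    set b := ((k).factorial : ℝ)
    have h6 : (2*(k:ℝ)+3) ≠ 0 := by positivity
    have h7 : (2*(k:ℝ)+2) ≠ 0 := by positivity
    push_cast
    field_simp
    ring

lemma integral_one_sub_sq (l : ℕ) : ∫ s in (-1:ℝ)..1, (1 - s^2)^l
    = 2 * (4 ^ l * (l.factorial : ℝ)^2 / ((2*l+1).factorial)) := by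
  have h := integral_sin_pow_odd (n := l)
  have hsub : (∫ θ in (0:ℝ)..π, (-Real.sin θ) • ((fun s => (1 - s^2)^l) ∘ Real.cos) θ)
      = ∫ s in (Real.cos 0)..(Real.cos π), (1 - s^2)^l := by
    apply integral_comp_smul_deriv (f := Real.cos) (f' := fun θ => -Real.sin θ)
    · intro t _; exact (Real.hasDerivAt_cos t)
    · exact (Real.continuous_sin.neg).continuousOn
    · fun_prop
  rw [Real.cos_zero, Real.cos_pi] at hsub
  have hident : (∫ θ in (0:ℝ)..π, (-Real.sin θ) • ((fun s => (1 - s^2)^l) ∘ Real.cos) θ)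
      = - ∫ θ in (0:ℝ)..π, Real.sin θ ^ (2*l+1) := by
    rw [← intervalIntegral.integral_neg]
    apply intervalIntegral.integral_congr
    intro θ _
    simp only [Function.comp, smul_eq_mul]
    have : (1 - Real.cos θ ^ 2) = Real.sin θ ^ 2 := by
      rw [← Real.sin_sq_add_cos_sq θ]; ring
    rw [this, ← pow_mul]
    ring
  rw [hident, h, prod_val] at hsub
  have h5 : (∫ s in (-1:ℝ)..1, (1 - s^2)^l) = - ∫ s in (1:ℝ)..(-1), (1-s^2)^l := by
    rw [intervalIntegral.integral_symm]
  rw [h5, ← hsub]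
  ring



lemma trapezoid (u u1 u2 : ℝ → ℝ) (a K : ℝ)
    (hu : ∀ t ∈ Set.Icc a (a+1), HasDerivAt u (u1 t) t)
    (hu1 : ∀ t ∈ Set.Icc a (a+1), HasDerivAt u1 (u2 t) t)
    (hc : ContinuousOn u2 (Set.Icc a (a+1)))
    (hK : ∀ t ∈ Set.Icc a (a+1), |u2 t| ≤ K) :
    |(∫ t in a..(a+1), u t) - (u a + u (a+1))/2| ≤ K/2 := by
  have hle : a ≤ a + 1 := by linarith
  have huicc : Set.uIcc a (a+1) = Set.Icc a (a+1) := Set.uIcc_of_le hle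
  set w : ℝ → ℝ := fun t => (t - a) * (a + 1 - t) / 2 with hw
  set w' : ℝ → ℝ := fun t => (2*a + 1 - 2*t) / 2 with hw'
  set G : ℝ → ℝ := fun t => w t * u1 t - w' t * u t with hG
  have hcu : ContinuousOn u (Set.Icc a (a+1)) :=
    fun t ht => ((hu t ht).continuousAt).continuousWithinAt
  have hcu1 : ContinuousOn u1 (Set.Icc a (a+1)) :=
    fun t ht => ((hu1 t ht).continuousAt).continuousWithinAt
  have hwc : Continuous w := by fun_prop
  have hint_u : IntervalIntegrable u MeasureTheory.volume a (a+1) :=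
    (hcu.mono (by rw [huicc])).intervalIntegrable
  have hint_wu2 : IntervalIntegrable (fun t => w t * u2 t) MeasureTheory.volume a (a+1) :=
    ((hwc.continuousOn.mul hc).mono (by rw [huicc])).intervalIntegrable
  have hderivG : ∀ t ∈ Set.uIcc a (a+1), HasDerivAt G (u t + w t * u2 t) t := by
    rw [huicc]
    intro t ht
    have hdw : HasDerivAt w (w' t) t := by
      have h := (((hasDerivAt_id t).sub_const a).mul
          (((hasDerivAt_const t (a+1)).sub (hasDerivAt_id t)))).div_const 2
      simp only [id] at h
      refine h.congr_deriv ?_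
      simp only [hw', Pi.sub_apply, id]; ring
    have hdw' : HasDerivAt w' (-1) t := by
      have h := (((hasDerivAt_const t (2*a+1)).sub
          ((hasDerivAt_id t).const_mul 2))).div_const 2
      simp only [id] at h
      refine h.congr_deriv ?_
      norm_num
    have : HasDerivAt G (w' t * u1 t + w t * u2 t - ((-1) * u t + w' t * u1 t)) t :=
      (hdw.mul (hu1 t ht)).sub (hdw'.mul (hu t ht))
    convert this using 1
    ring
  have hint_sum : IntervalIntegrable (fun t => u t + w t * u2 t) MeasureTheory.volume a (a+1) :=
    hint_u.add hint_wu2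
  have hFTC := intervalIntegral.integral_eq_sub_of_hasDerivAt hderivG hint_sum
  have hGb : G (a+1) = u (a+1) / 2 := by simp [hG, hw, hw']; ring
  have hGa : G a = - (u a / 2) := by simp [hG, hw, hw']; ring
  rw [intervalIntegral.integral_add hint_u hint_wu2, hGb, hGa] at hFTC
  have hsplit : (∫ t in a..(a+1), u t) - (u a + u (a+1))/2 = - ∫ t in a..(a+1), w t * u2 t := by
    linarith
  rw [hsplit, abs_neg]
  have hK0 : 0 ≤ K := le_trans (abs_nonneg _) (hK a (by constructor <;> linarith))
  have hbound : ∀ t ∈ Set.uIoc a (a+1), ‖w t * u2 t‖ ≤ K/2 := by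
    intro t ht
    rw [Set.uIoc_of_le hle] at ht
    have ht' : t ∈ Set.Icc a (a+1) := ⟨le_of_lt ht.1, ht.2⟩
    rw [Real.norm_eq_abs, abs_mul]
    have hw1 : |w t| ≤ 1/2 := by
      rw [abs_div]
      rw [abs_of_nonneg (by nlinarith [ht'.1, ht'.2] : (0:ℝ) ≤ (t - a) * (a + 1 - t))]
      have : (t - a) * (a + 1 - t) ≤ 1 := by nlinarith [ht'.1, ht'.2]
      simp only [abs_two]
      linarith
    calc |w t| * |u2 t| ≤ (1/2) * K :=
          mul_le_mul hw1 (hK t ht') (abs_nonneg _) (by norm_num)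
      _ = K/2 := by ring
  have := intervalIntegral.norm_integral_le_of_norm_le_const hbound
  rw [Real.norm_eq_abs] at this
  calc |∫ t in a..(a+1), w t * u2 t| ≤ K/2 * |a + 1 - a| := this
    _ = K/2 := by simp



lemma sum_shift (u : ℝ → ℝ) (N : ℕ) :
    (∑ i ∈ Finset.range N, u ((i:ℝ)+1)) = ∑ m ∈ Finset.Icc 1 N, u m := by
  induction N with
  | zero => simp
  | succ n ih =>
    rw [Finset.sum_range_succ, ih, Finset.sum_Icc_succ_top (Nat.succ_le_succ (Nat.zero_le n))]
    push_cast
    ring_nf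

lemma sum_trapezoid (u u1 u2 : ℝ → ℝ) (N : ℕ) (K : ℝ)
    (hu : ∀ t ∈ Set.Icc (0:ℝ) N, HasDerivAt u (u1 t) t)
    (hu1 : ∀ t ∈ Set.Icc (0:ℝ) N, HasDerivAt u1 (u2 t) t)
    (hc : ContinuousOn u2 (Set.Icc (0:ℝ) N))
    (hK : ∀ t ∈ Set.Icc (0:ℝ) N, |u2 t| ≤ K) :
    |(∑ m ∈ Finset.Icc 1 N, u m) - ((∫ t in (0:ℝ)..N, u t) + (u N - u 0)/2)|
      ≤ N * (K/2) := by
  have hsub : ∀ i : ℕ, i < N → Set.Icc (i:ℝ) (i+1) ⊆ Set.Icc (0:ℝ) N := by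
    intro i hi t ht
    have h1 : (i:ℝ) + 1 ≤ N := by exact_mod_cast Nat.succ_le_of_lt hi
    exact ⟨le_trans (by positivity) ht.1, le_trans ht.2 h1⟩
  have hcu : ContinuousOn u (Set.Icc (0:ℝ) N) :=
    fun t ht => ((hu t ht).continuousAt).continuousWithinAt
  have hint : ∀ k : ℕ, k < N →
      IntervalIntegrable u MeasureTheory.volume ((fun i : ℕ => (i:ℝ)) k) ((fun i : ℕ => (i:ℝ)) (k+1)) := by
    intro k hk
    apply ContinuousOn.intervalIntegrable
    apply hcu.mono
    simp only
    rw [Nat.cast_add, Nat.cast_one, Set.uIcc_of_le (by linarith : ((k:ℝ) ≤ (k:ℝ)+1))]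
    exact hsub k hk
  have hsplit := intervalIntegral.sum_integral_adjacent_intervals (f := u)
    (μ := MeasureTheory.volume) (a := fun i : ℕ => (i:ℝ)) (n := N) hint
  simp only [Nat.cast_zero] at hsplit
  push_cast at hsplit
  -- per-interval trapezoid
  have htrap : ∀ i ∈ Finset.range N,
      |(∫ t in (i:ℝ)..((i:ℝ)+1), u t) - (u i + u ((i:ℝ)+1))/2| ≤ K/2 := by
    intro i hi
    rw [Finset.mem_range] at hi
    exact trapezoid u u1 u2 (i:ℝ) K
      (fun t ht => hu t (hsub i hi ht)) (fun t ht => hu1 t (hsub i hi ht))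
      (hc.mono (hsub i hi)) (fun t ht => hK t (hsub i hi ht))
  -- sum identity
  have hsum_id : (∑ i ∈ Finset.range N, (u i + u ((i:ℝ)+1))/2)
      = (∑ m ∈ Finset.Icc 1 N, u m) + (u 0 - u N)/2 := by
    have e1 : (∑ i ∈ Finset.range N, (u i + u ((i:ℝ)+1))/2)
        = ((∑ i ∈ Finset.range N, u i) + ∑ i ∈ Finset.range N, u ((i:ℝ)+1))/2 := by
      rw [← Finset.sum_add_distrib, ← Finset.sum_div]
    have e2 := sum_shift u N
    have e4 := Finset.sum_range_succ' (fun i : ℕ => u i) N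
    have e5 := Finset.sum_range_succ (fun i : ℕ => u i) N
    push_cast at e4 e5
    have e3 : (∑ i ∈ Finset.range N, u i) = (∑ m ∈ Finset.Icc 1 N, u m) + u 0 - u N := by
      rw [← e2]; rw [e4] at e5; linarith
    rw [e1, e2, e3]
    ring
  calc |(∑ m ∈ Finset.Icc 1 N, u m) - ((∫ t in (0:ℝ)..N, u t) + (u N - u 0)/2)|
      = |∑ i ∈ Finset.range N, ((∫ t in (i:ℝ)..((i:ℝ)+1), u t) - (u i + u ((i:ℝ)+1))/2)| := by
        rw [Finset.sum_sub_distrib]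
        rw [hsplit, hsum_id]
        rw [abs_sub_comm]
        congr 1
        push_cast
        ring
    _ ≤ ∑ i ∈ Finset.range N, |(∫ t in (i:ℝ)..((i:ℝ)+1), u t) - (u i + u ((i:ℝ)+1))/2| :=
        Finset.abs_sum_le_sum_abs _ _
    _ ≤ ∑ i ∈ Finset.range N, (K/2) := Finset.sum_le_sum htrap
    _ = N * (K/2) := by simp [mul_comm]



lemma integral_zero_one (l : ℕ) : ∫ s in (0:ℝ)..1, (1 - s^2)^l
    = 4 ^ l * (l.factorial : ℝ)^2 / ((2*l+1).factorial) := by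
  have hi : IntervalIntegrable (fun s : ℝ => (1 - s^2)^l) MeasureTheory.volume (-1) 0 := by
    apply Continuous.intervalIntegrable; fun_prop
  have hi2 : IntervalIntegrable (fun s : ℝ => (1 - s^2)^l) MeasureTheory.volume 0 1 := by
    apply Continuous.intervalIntegrable; fun_prop
  have hsplit := intervalIntegral.integral_add_adjacent_intervals hi hi2
  have hneg := intervalIntegral.integral_comp_neg (a := (0:ℝ)) (b := 1)
    (fun s : ℝ => (1 - s^2)^l)
  have heq : (∫ s in (0:ℝ)..1, (1 - (-s)^2)^l) = ∫ s in (0:ℝ)..1, (1 - s^2)^l := by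
    apply intervalIntegral.integral_congr; intro s _; norm_num
  have h := integral_one_sub_sq l
  rw [← hsplit] at h
  rw [heq] at hneg
  norm_num at hneg
  rw [hneg] at h
  linarith

lemma integral_scale (l : ℕ) (x : ℝ) (hx : 0 < x) :
    ∫ t in (0:ℝ)..(Real.sqrt x), (x - t^2)^l
      = (4 ^ l * (l.factorial : ℝ)^2 / ((2*l+1).factorial)) * x ^ ((l:ℝ) + 1/2) := by
  have hs : Real.sqrt x ≠ 0 := by positivity
  have h := intervalIntegral.integral_comp_mul_left (a := (0:ℝ)) (b := 1)
    (fun t : ℝ => (x - t^2)^l) hs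
  simp only [mul_zero, mul_one, smul_eq_mul] at h
  have heq : (∫ s in (0:ℝ)..1, (x - (Real.sqrt x * s)^2)^l)
      = ∫ s in (0:ℝ)..1, x^l * (1 - s^2)^l := by
    apply intervalIntegral.integral_congr; intro s _
    show (x - (Real.sqrt x * s)^2)^l = x^l * (1 - s^2)^l
    rw [mul_pow, Real.sq_sqrt hx.le, show x - x*s^2 = x*(1-s^2) by ring, mul_pow]
  rw [heq, intervalIntegral.integral_const_mul, integral_zero_one] at h
  rw [eq_comm, inv_mul_eq_iff_eq_mul₀ hs] at h
  rw [h]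
  rw [show x ^ ((l:ℝ) + 1/2) = x ^ (l:ℝ) * x ^ ((1:ℝ)/2) from Real.rpow_add hx _ _]
  rw [Real.rpow_natCast, ← Real.sqrt_eq_rpow]
  ring

lemma integral_t_mul (l : ℕ) (hl : 1 ≤ l) (x b : ℝ) :
    ∫ t in (0:ℝ)..b, t * (x - t^2)^(l-1)
      = (x^l - (x - b^2)^l) / (2*l) := by
  have hFTC := intervalIntegral.integral_eq_sub_of_hasDerivAt
    (f := fun t : ℝ => -(x - t^2)^l / (2*l))
    (f' := fun t : ℝ => t * (x - t^2)^(l-1)) (a := (0:ℝ)) (b := b) ?_ ?_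
  · rw [hFTC]; norm_num; ring
  · intro t _
    have h1 : HasDerivAt (fun t : ℝ => x - t^2) (-(2*t)) t := by
      simpa using ((hasDerivAt_pow 2 t).const_sub x)
    have h2 := (h1.pow l).neg.div_const (2*(l:ℝ))
    refine h2.congr_deriv ?_
    have hlc : (l:ℝ) ≠ 0 := by positivity
    field_simp
  · apply Continuous.intervalIntegrable; fun_prop



section U
variable (l : ℕ) (x : ℝ)

noncomputable def uu : ℝ → ℝ := fun t => (x - t^2 - l*t)^l
noncomputable def uu1 : ℝ → ℝ := fun t => (l:ℝ) * (x - t^2 - l*t)^(l-1) * (-(2*t) - l)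
noncomputable def uu2 : ℝ → ℝ := fun t =>
  (l:ℝ) * (((l-1:ℕ):ℝ) * (x - t^2 - l*t)^(l-1-1) * (-(2*t) - l)) * (-(2*t) - l)
    + ((l:ℝ) * (x - t^2 - l*t)^(l-1)) * (-2)

lemma hp_deriv (t : ℝ) : HasDerivAt (fun t : ℝ => x - t^2 - l*t) (-(2*t) - l) t := by
  have h1 : HasDerivAt (fun t : ℝ => x - t^2) (-(2*t)) t := by
    simpa using ((hasDerivAt_pow 2 t).const_sub x)
  have h2 : HasDerivAt (fun t : ℝ => (l:ℝ)*t) (l:ℝ) t := by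
    simpa using (hasDerivAt_id t).const_mul (l:ℝ)
  exact h1.sub h2

lemma hq_deriv (t : ℝ) : HasDerivAt (fun t : ℝ => -(2*t) - (l:ℝ)) (-2) t := by
  have h2 : HasDerivAt (fun t : ℝ => (2:ℝ)*t) (2:ℝ) t := by
    simpa using (hasDerivAt_id t).const_mul (2:ℝ)
  simpa using (h2.neg.sub_const (l:ℝ))

lemma uu_deriv (t : ℝ) : HasDerivAt (uu l x) (uu1 l x t) t := by
  have := ((hp_deriv l x t).pow l)
  exact this

lemma uu1_deriv (t : ℝ) : HasDerivAt (uu1 l x) (uu2 l x t) t := by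
  have hA : HasDerivAt (fun t : ℝ => (l:ℝ) * (x - t^2 - l*t)^(l-1))
      ((l:ℝ) * (((l-1:ℕ):ℝ) * (x - t^2 - l*t)^(l-1-1) * (-(2*t) - l))) t :=
    (((hp_deriv l x t).pow (l-1))).const_mul (l:ℝ)
  have := hA.mul (hq_deriv l t)
  exact this

lemma uu2_cont : Continuous (uu2 l x) := by unfold uu2; fun_prop

lemma uu2_bound (hl : 1 ≤ l) (t : ℝ) (hx : 1 ≤ x) (ht0 : 0 ≤ t) (ht : t ≤ Real.sqrt x) :
    |uu2 l x t| ≤ ((l*(l-1)*(1+l)^l*(2+l)^2 + 2*l*(1+l)^l : ℕ) : ℝ) * x^(l-1) := by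
  have hx0 : (0:ℝ) < x := by linarith
  have hsx1 : (1:ℝ) ≤ Real.sqrt x := by
    rw [show (1:ℝ) = Real.sqrt 1 by simp]; exact Real.sqrt_le_sqrt hx
  have hsxx : Real.sqrt x ≤ x := by
    have h := Real.sqrt_le_sqrt (by nlinarith : x ≤ x*x)
    rwa [Real.sqrt_mul_self (by linarith : (0:ℝ) ≤ x)] at h
  have ht2 : t^2 ≤ x := by nlinarith [Real.sq_sqrt hx0.le, Real.sqrt_nonneg x]
  have htx : t ≤ x := le_trans ht hsxx
  have hp_abs : |x - t^2 - l*t| ≤ (1+l)*x := by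
    rw [abs_le]
    constructor
    · nlinarith [Nat.cast_nonneg (α := ℝ) l]
    · nlinarith [Nat.cast_nonneg (α := ℝ) l]
  have hq_abs : |-(2*t) - (l:ℝ)| ≤ (2+l)*Real.sqrt x := by
    rw [abs_le]
    constructor
    · nlinarith [Nat.cast_nonneg (α := ℝ) l]
    · nlinarith [Nat.cast_nonneg (α := ℝ) l]
  have hq0 : (0:ℝ) ≤ (2+l)*Real.sqrt x := by positivity
  have hp0 : (0:ℝ) ≤ (1+l)*x := by positivity
  have habs : |uu2 l x t| ≤
      (l:ℝ) * (((l-1:ℕ):ℝ) * ((1+l)*x)^(l-1-1) * ((2+l)*Real.sqrt x)) * ((2+l)*Real.sqrt x)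
        + ((l:ℝ) * ((1+l)*x)^(l-1)) * 2 := by
    unfold uu2
    calc |(l:ℝ) * (((l-1:ℕ):ℝ) * (x - t^2 - l*t)^(l-1-1) * (-(2*t) - l)) * (-(2*t) - l)
          + ((l:ℝ) * (x - t^2 - l*t)^(l-1)) * (-2)|
        ≤ |(l:ℝ) * (((l-1:ℕ):ℝ) * (x - t^2 - l*t)^(l-1-1) * (-(2*t) - l)) * (-(2*t) - l)|
          + |((l:ℝ) * (x - t^2 - l*t)^(l-1)) * (-2)| := abs_add_le _ _
      _ = (l:ℝ) * (((l-1:ℕ):ℝ) * |x - t^2 - l*t|^(l-1-1) * |(-(2*t) - l)|) * |(-(2*t) - l)|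
          + ((l:ℝ) * |x - t^2 - l*t|^(l-1)) * 2 := by
          simp [abs_mul, abs_pow, Nat.abs_cast]
      _ ≤ (l:ℝ) * (((l-1:ℕ):ℝ) * ((1+l)*x)^(l-1-1) * ((2+l)*Real.sqrt x)) * ((2+l)*Real.sqrt x)
          + ((l:ℝ) * ((1+l)*x)^(l-1)) * 2 := by
          gcongr <;> first
              | exact hp_abs
              | exact hq_abs
              | exact abs_nonneg _
  refine le_trans habs ?_
  -- now pure estimate
  rcases Nat.lt_or_ge l 2 with h2 | h2
  · interval_cases l
    norm_num
  set s := Real.sqrt x with hs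
  have e3 : s * s = x := Real.mul_self_sqrt hx0.le
  have e4 : x^(l-1-1) * x = x^(l-1) := by
    rw [← pow_succ]
    congr 1
    omega
  have h1l : (1:ℝ) ≤ 1 + (l:ℝ) := le_add_of_nonneg_right (Nat.cast_nonneg l)
  calc (l:ℝ) * (((l-1:ℕ):ℝ) * ((1+l)*x)^(l-1-1) * ((2+l)*s)) * ((2+l)*s)
          + ((l:ℝ) * ((1+l)*x)^(l-1)) * 2
      = ((l:ℝ) * ((l-1:ℕ):ℝ) * (1+(l:ℝ))^(l-1-1) * (2+(l:ℝ))^2) * (x^(l-1-1) * (s*s))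
          + (2*(l:ℝ)*(1+(l:ℝ))^(l-1)) * x^(l-1) := by
        rw [mul_pow, mul_pow]
        ring
    _ = ((l:ℝ) * ((l-1:ℕ):ℝ) * (1+(l:ℝ))^(l-1-1) * (2+(l:ℝ))^2) * x^(l-1)
          + (2*(l:ℝ)*(1+(l:ℝ))^(l-1)) * x^(l-1) := by rw [e3, e4]
    _ ≤ ((l:ℝ) * ((l-1:ℕ):ℝ) * (1+(l:ℝ))^l * (2+(l:ℝ))^2) * x^(l-1)
          + (2*(l:ℝ)*(1+(l:ℝ))^l) * x^(l-1) := by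
        have g1 : (1+(l:ℝ))^(l-1-1) ≤ (1+(l:ℝ))^l := pow_le_pow_right₀ h1l (by omega)
        have g2 : (1+(l:ℝ))^(l-1) ≤ (1+(l:ℝ))^l := pow_le_pow_right₀ h1l (by omega)
        have hxp : (0:ℝ) ≤ x^(l-1) := by positivity
        have c1 : (0:ℝ) ≤ (l:ℝ) * ((l-1:ℕ):ℝ) * (2+(l:ℝ))^2 := by positivity
        nlinarith [mul_le_mul_of_nonneg_right g1 hxp, mul_le_mul_of_nonneg_right g2 hxp,
          Nat.cast_nonneg (α := ℝ) l, sq_nonneg (2+(l:ℝ))]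
    _ = ((l*(l-1)*(1+l)^l*(2+l)^2 + 2*l*(1+l)^l : ℕ) : ℝ) * x^(l-1) := by
        push_cast
        ring



lemma R_bound (l : ℕ) (hl : 1 ≤ l) (x t : ℝ) (hx : 1 ≤ x) (ht0 : 0 ≤ t)
    (ht : t ≤ Real.sqrt x) :
    |(x - t^2 - l*t)^l - ((x-t^2)^l - (l:ℝ)^2 * t * (x-t^2)^(l-1))|
      ≤ ((2^l * l^l : ℕ) : ℝ) * x^(l-1) := by
  obtain ⟨m, rfl⟩ : ∃ m, l = m + 1 := ⟨l-1, (Nat.succ_pred_eq_of_pos hl).symm⟩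
  have hx0 : (0:ℝ) < x := by linarith
  have hsxx : Real.sqrt x ≤ x := by
    have h := Real.sqrt_le_sqrt (by nlinarith : x ≤ x*x)
    rwa [Real.sqrt_mul_self (by linarith : (0:ℝ) ≤ x)] at h
  have ht2 : t^2 ≤ x := by nlinarith [Real.sq_sqrt hx0.le, Real.sqrt_nonneg x]
  set A : ℝ := x - t^2 with hA
  set B : ℝ := -(((m:ℝ)+1)*t) with hB
  have hsum : (x - t^2 - (m+1:ℕ)*t)^(m+1) = ∑ k ∈ range (m+2), A^k * B^(m+1-k) * ((m+1).choose k) := by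
    rw [show x - t^2 - ((m+1:ℕ):ℝ)*t = A + B by push_cast [hA, hB]; ring]
    exact add_pow A B (m+1)
  rw [hsum, Finset.sum_range_succ, Finset.sum_range_succ]
  have hTop : A^(m+1) * B^(m+1-(m+1)) * ((m+1).choose (m+1)) = A^(m+1) := by
    simp
  have hSec : A^m * B^(m+1-m) * ((m+1).choose m) = -(((m+1:ℕ):ℝ)^2 * t * A^m) := by
    rw [Nat.choose_succ_self_right]
    have : m+1-m = 1 := by omega
    rw [this, pow_one, hB]
    push_cast
    ring
  rw [hTop, hSec]
  have hgoal : (∑ k ∈ range m, A^k * B^(m+1-k) * ((m+1).choose k))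
      + -(((m+1:ℕ):ℝ)^2 * t * A^m) + A^(m+1)
      - ((x-t^2)^(m+1) - ((m+1:ℕ):ℝ)^2 * t * (x-t^2)^(m+1-1))
      = ∑ k ∈ range m, A^k * B^(m+1-k) * ((m+1).choose k) := by
    have : m+1-1 = m := by omega
    rw [this, ← hA]
    push_cast
    ring
  rw [hgoal]
  -- bound the sum
  have hterm : ∀ k ∈ range m, |A^k * B^(m+1-k) * ((m+1).choose k)|
      ≤ ((m+1).choose k : ℝ) * (((m+1:ℕ))^(m+1) : ℕ) * x^m := by
    intro k hk
    rw [Finset.mem_range] at hk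
    have hAb : |A| ≤ x := by rw [hA, abs_le]; constructor <;> nlinarith
    have hBb : |B| ≤ ((m:ℝ)+1) * Real.sqrt x := by
      rw [hB, abs_neg, abs_mul]
      rw [abs_of_nonneg (by positivity : (0:ℝ) ≤ (m:ℝ)+1), abs_of_nonneg ht0]
      have : (0:ℝ) ≤ (m:ℝ)+1 := by positivity
      nlinarith
    have hs1 : (1:ℝ) ≤ Real.sqrt x := by
      rw [show (1:ℝ) = Real.sqrt 1 by simp]; exact Real.sqrt_le_sqrt hx
    -- |A|^k ≤ x^k, |B|^(m+1-k) ≤ ((m+1)√x)^(m+1-k) ≤ (m+1)^(m+1) * x^(m-k)... 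
    have hsplit : m+1-k = (m-1-k) + 2 := by omega
    have hBpow : |B|^(m+1-k) ≤ ((m:ℝ)+1)^(m+1) * (x^(m-1-k) * x) := by
      calc |B|^(m+1-k) ≤ (((m:ℝ)+1) * Real.sqrt x)^(m+1-k) :=
            pow_le_pow_left₀ (abs_nonneg _) hBb _
        _ = ((m:ℝ)+1)^(m+1-k) * (Real.sqrt x^(m-1-k) * (Real.sqrt x * Real.sqrt x)) := by
            rw [hsplit, mul_pow]
            ring
        _ ≤ ((m:ℝ)+1)^(m+1) * (x^(m-1-k) * x) := by
            rw [Real.mul_self_sqrt hx0.le]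
            gcongr <;>
              first
                | omega
                | positivity
                | exact hsxx
                | linarith [Nat.cast_nonneg (α := ℝ) m]
    have hApow : |A|^k ≤ x^k := pow_le_pow_left₀ (abs_nonneg _) hAb _
    calc |A^k * B^(m+1-k) * ((m+1).choose k)|
        = |A|^k * |B|^(m+1-k) * ((m+1).choose k : ℝ) := by
          rw [abs_mul, abs_mul, abs_pow, abs_pow, Nat.abs_cast]
      _ ≤ x^k * (((m:ℝ)+1)^(m+1) * (x^(m-1-k) * x)) * ((m+1).choose k : ℝ) := by
          gcongr
      _ = ((m+1).choose k : ℝ) * (((m:ℝ)+1)^(m+1)) * (x^k * x^(m-1-k) * x) := by ring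
      _ = ((m+1).choose k : ℝ) * (((m+1:ℕ))^(m+1) : ℕ) * x^m := by
          rw [← pow_add, ← pow_succ]
          have : k + (m-1-k) + 1 = m := by omega
          rw [this]
          push_cast
          ring
  calc |∑ k ∈ range m, A^k * B^(m+1-k) * ((m+1).choose k)|
      ≤ ∑ k ∈ range m, |A^k * B^(m+1-k) * ((m+1).choose k)| := Finset.abs_sum_le_sum_abs _ _
    _ ≤ ∑ k ∈ range m, ((m+1).choose k : ℝ) * (((m+1:ℕ))^(m+1) : ℕ) * x^m :=
        Finset.sum_le_sum hterm
    _ ≤ ((2^(m+1) * (m+1)^(m+1) : ℕ) : ℝ) * x^(m+1-1) := by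
        have hb : (∑ k ∈ range m, ((m+1).choose k : ℝ)) ≤ (2^(m+1) : ℝ) := by
          have h1 : (∑ k ∈ range m, ((m+1).choose k)) ≤ ∑ k ∈ range (m+2), ((m+1).choose k) :=
            Finset.sum_le_sum_of_subset (Finset.range_subset_range.mpr (by omega))
          rw [Nat.sum_range_choose] at h1
          exact_mod_cast (Nat.cast_le (α := ℝ)).mpr h1
        have hxm : (0:ℝ) ≤ x^m := by positivity
        have : m+1-1 = m := by omega
        rw [this]
        push_cast
        rw [← Finset.sum_mul, ← Finset.sum_mul]
        have hp : (0:ℝ) ≤ ((m:ℝ)+1)^(m+1) := by positivity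
        push_cast at hb
        exact mul_le_mul_of_nonneg_right (mul_le_mul_of_nonneg_right hb hp) hxm

set_option maxHeartbeats 4000000 in
/-- `∑_{1 ≤ m ≤ √x} m^l (x/(2m) − m/2 − l/2)^l
      = ((l!)² 2^l/(2l+1)!) x^{l+1/2} − ((l+1)/2^{l+1}) x^l + O(x^{l−1/2})`. -/
theorem sum_m_power_l (l : ℕ) (hl : 1 ≤ l) :
    ∃ C x₀ : ℝ, 0 < C ∧ 1 ≤ x₀ ∧ ∀ x : ℝ, x₀ ≤ x →
      |(∑ m ∈ Finset.Icc 1 ⌊Real.sqrt x⌋₊,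
          (m : ℝ) ^ l * (x / (2 * m) - m / 2 - l / 2) ^ l) -
        (((l.factorial : ℝ) ^ 2 * 2 ^ l / ((2 * l + 1).factorial : ℝ)) *
            x ^ ((l : ℝ) + 1/2) - ((l + 1 : ℝ) / 2 ^ (l + 1)) * x ^ (l : ℕ))|
        ≤ C * x ^ ((l : ℝ) - 1/2) := by
  set K2 : ℝ := ((l*(l-1)*(1+l)^l*(2+l)^2 + 2*l*(1+l)^l : ℕ) : ℝ) with hK2
  have hK2nn : 0 ≤ K2 := Nat.cast_nonneg _
  set Ctot : ℝ := K2 + (2+l)^l + 2^l*l^l + 2^l + (l:ℝ)*2^l with hCtot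
  refine ⟨Ctot, 1, ?_, le_refl 1, ?_⟩
  · have h4 : (0:ℝ) < 2^l := by positivity
    have h1 : (0:ℝ) ≤ (2+(l:ℝ))^l := by positivity
    have h2 : (0:ℝ) ≤ 2^l*(l:ℝ)^l := by positivity
    have h3 : (0:ℝ) ≤ (l:ℝ)*2^l := by positivity
    rw [hCtot]
    linarith
  intro x hx
  have hx0 : (0:ℝ) < x := by linarith
  set s : ℝ := Real.sqrt x with hs
  set N : ℕ := ⌊s⌋₊ with hN
  have hs1 : (1:ℝ) ≤ s := by
    rw [hs, show (1:ℝ) = Real.sqrt 1 by simp]; exact Real.sqrt_le_sqrt hx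
  have hss : s * s = x := Real.mul_self_sqrt hx0.le
  have hsx : s ≤ x := by nlinarith
  have hNs : (N:ℝ) ≤ s := Nat.floor_le (by linarith)
  have hsN1 : s < N + 1 := Nat.lt_floor_add_one s
  have hN1 : 1 ≤ N := Nat.le_floor (by exact_mod_cast hs1)
  have hN0 : (0:ℝ) ≤ (N:ℝ) := Nat.cast_nonneg N
  -- step 0 : rewrite the sum
  have hsum0 : (∑ m ∈ Finset.Icc 1 N, (m : ℝ) ^ l * (x / (2 * m) - m / 2 - l / 2) ^ l)
      = (1/2^l) * ∑ m ∈ Finset.Icc 1 N, uu l x m := by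
    rw [Finset.mul_sum]
    apply Finset.sum_congr rfl
    intro m hm
    rw [Finset.mem_Icc] at hm
    have hm0 : (0:ℝ) < m := by exact_mod_cast hm.1
    have : (m:ℝ) ^ l * (x / (2 * m) - m / 2 - l / 2) ^ l
        = ((m:ℝ) * (x / (2 * m) - m / 2 - l / 2)) ^ l := (mul_pow _ _ _).symm
    rw [this, show (m:ℝ) * (x / (2 * m) - m / 2 - l / 2) = (x - m^2 - l*m)/2 by
      field_simp]
    rw [div_pow, uu]
    ring
  -- trapezoid
  have htrap := sum_trapezoid (uu l x) (uu1 l x) (uu2 l x) N (K2 * x^(l-1))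
    (fun t _ => uu_deriv l x t) (fun t _ => uu1_deriv l x t)
    ((uu2_cont l x).continuousOn)
    (fun t ht => uu2_bound l x hl t hx ht.1 (le_trans ht.2 hNs))
  -- integrand pieces
  set g1 : ℝ → ℝ := fun t => (x - t^2)^l with hg1
  set g2 : ℝ → ℝ := fun t => t * (x - t^2)^(l-1) with hg2
  set Rf : ℝ → ℝ := fun t => uu l x t - g1 t + (l:ℝ)^2 * g2 t with hRf
  have hcont_uu : Continuous (uu l x) := by unfold uu; fun_prop
  have hcont_g1 : Continuous g1 := by rw [hg1]; fun_prop
  have hcont_g2 : Continuous g2 := by rw [hg2]; fun_prop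
  have hcont_R : Continuous Rf := by rw [hRf]; fun_prop
  have hint_g1N : IntervalIntegrable g1 MeasureTheory.volume 0 N :=
    hcont_g1.intervalIntegrable _ _
  have hint_g1Ns : IntervalIntegrable g1 MeasureTheory.volume N s :=
    hcont_g1.intervalIntegrable _ _
  have hint_g2 : IntervalIntegrable g2 MeasureTheory.volume 0 N :=
    hcont_g2.intervalIntegrable _ _
  have hint_R : IntervalIntegrable Rf MeasureTheory.volume 0 N :=
    hcont_R.intervalIntegrable _ _
  have hIresolve : (∫ t in (0:ℝ)..N, uu l x t)
      = (∫ t in (0:ℝ)..N, g1 t) - (l:ℝ)^2 * (∫ t in (0:ℝ)..N, g2 t) + ∫ t in (0:ℝ)..N, Rf t := by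
    rw [← intervalIntegral.integral_const_mul,
      ← intervalIntegral.integral_sub hint_g1N (hint_g2.const_mul _),
      ← intervalIntegral.integral_add (hint_g1N.sub (hint_g2.const_mul _)) hint_R]
    apply intervalIntegral.integral_congr
    intro t _
    simp only [hRf]
    ring
  have hsplit_g1 : (∫ t in (0:ℝ)..N, g1 t) = (∫ t in (0:ℝ)..s, g1 t) - ∫ t in (N:ℝ)..s, g1 t := by
    have := intervalIntegral.integral_add_adjacent_intervals hint_g1N hint_g1Ns
    linarith
  have hscale : (∫ t in (0:ℝ)..s, g1 t)
      = (4 ^ l * (l.factorial : ℝ)^2 / ((2*l+1).factorial)) * x ^ ((l:ℝ) + 1/2) :=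
    integral_scale l x hx0
  have hanti : (∫ t in (0:ℝ)..(N:ℝ), g2 t) = (x^l - (x - (N:ℝ)^2)^l) / (2*l) :=
    integral_t_mul l hl x N
  -- error bounds
  have hxl1 : (0:ℝ) ≤ x^(l-1) := by positivity
  have hE : (0:ℝ) ≤ x^(l-1) * s := by positivity
  -- x - N^2 bounds
  have hxN2a : (0:ℝ) ≤ x - (N:ℝ)^2 := by nlinarith
  have hxN2b : x - (N:ℝ)^2 ≤ 2*s := by nlinarith
  have hsl : s^l ≤ x^(l-1) * s := by
    have h1 : s^(l-1) ≤ x^(l-1) := pow_le_pow_left₀ (by linarith) hsx _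
    calc s^l = s^(l-1) * s := by rw [← pow_succ]; congr 1; omega
      _ ≤ x^(l-1) * s := by nlinarith
  -- T2 bound : |uu N / 2| ≤ (2+l)^l * (x^(l-1) * s) / 2  (we use ≤ (2+l)^l E)
  have hT2 : |uu l x N| ≤ (2+(l:ℝ))^l * (x^(l-1) * s) := by
    have hp : |x - (N:ℝ)^2 - l*N| ≤ (2+(l:ℝ))*s := by
      rw [abs_le]
      constructor
      · have : (l:ℝ)*N ≤ (l:ℝ)*s := by
          have := (Nat.cast_nonneg (α := ℝ) l); nlinarith
        nlinarith [Nat.cast_nonneg (α := ℝ) l]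
      · nlinarith [Nat.cast_nonneg (α := ℝ) l, Nat.cast_nonneg (α := ℝ) N]
    calc |uu l x N| = |x - (N:ℝ)^2 - l*N|^l := by rw [uu, abs_pow]
      _ ≤ ((2+(l:ℝ))*s)^l := pow_le_pow_left₀ (abs_nonneg _) hp _
      _ = (2+(l:ℝ))^l * s^l := mul_pow _ _ _
      _ ≤ (2+(l:ℝ))^l * (x^(l-1) * s) :=
          mul_le_mul_of_nonneg_left hsl (by positivity)
  -- T3 bound
  have hT3 : |∫ t in (0:ℝ)..N, Rf t| ≤ (2^l*(l:ℝ)^l) * (x^(l-1) * s) := by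
    have hb : ∀ t ∈ Set.uIoc (0:ℝ) (N:ℝ), ‖Rf t‖ ≤ ((2^l * l^l : ℕ) : ℝ) * x^(l-1) := by
      intro t ht
      rw [Set.uIoc_of_le hN0] at ht
      have ht0 : 0 ≤ t := le_of_lt ht.1
      have hts : t ≤ s := le_trans ht.2 hNs
      have := R_bound l hl x t hx ht0 hts
      rw [Real.norm_eq_abs]
      calc |Rf t| = |(x - t^2 - l*t)^l - ((x-t^2)^l - (l:ℝ)^2 * t * (x-t^2)^(l-1))| := by
            simp only [hRf, uu, hg1, hg2]; ring_nf
        _ ≤ ((2^l * l^l : ℕ) : ℝ) * x^(l-1) := this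
    have h := intervalIntegral.norm_integral_le_of_norm_le_const hb
    rw [Real.norm_eq_abs] at h
    calc |∫ t in (0:ℝ)..N, Rf t| ≤ ((2^l * l^l : ℕ) : ℝ) * x^(l-1) * |(N:ℝ) - 0| := h
      _ = (2^l*(l:ℝ)^l) * x^(l-1) * (N:ℝ) := by
          rw [sub_zero, abs_of_nonneg hN0]; push_cast; ring
      _ = (2^l*(l:ℝ)^l) * (x^(l-1) * (N:ℝ)) := by ring
      _ ≤ (2^l*(l:ℝ)^l) * (x^(l-1) * s) :=
          mul_le_mul_of_nonneg_left (mul_le_mul_of_nonneg_left hNs hxl1) (by positivity)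
  -- T4 bound
  have hT4 : |∫ t in (N:ℝ)..s, g1 t| ≤ 2^l * (x^(l-1) * s) := by
    have hb : ∀ t ∈ Set.uIoc (N:ℝ) s, ‖g1 t‖ ≤ 2^l * (x^(l-1) * s) := by
      intro t ht
      rw [Set.uIoc_of_le hNs] at ht
      have h1 : (0:ℝ) ≤ x - t^2 := by nlinarith [ht.1, ht.2]
      have h2 : x - t^2 ≤ 2*s := by nlinarith [ht.1, ht.2]
      rw [Real.norm_eq_abs, hg1]
      calc |(x - t^2)^l| = |x - t^2|^l := abs_pow _ _
        _ ≤ (2*s)^l := pow_le_pow_left₀ (abs_nonneg _) (by rw [abs_of_nonneg h1]; exact h2) _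
        _ = 2^l * s^l := mul_pow _ _ _
        _ ≤ 2^l * (x^(l-1) * s) :=
            mul_le_mul_of_nonneg_left hsl (by positivity)
    have h := intervalIntegral.norm_integral_le_of_norm_le_const hb
    rw [Real.norm_eq_abs] at h
    calc |∫ t in (N:ℝ)..s, g1 t| ≤ 2^l * (x^(l-1) * s) * |s - N| := h
      _ ≤ 2^l * (x^(l-1) * s) * 1 := by
          have h0 : (0:ℝ) ≤ 2^l * (x^(l-1)*s) := by positivity
          have h1 : |s - (N:ℝ)| ≤ 1 := by rw [abs_of_nonneg (by linarith)]; linarith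
          exact mul_le_mul_of_nonneg_left h1 h0
      _ = 2^l * (x^(l-1) * s) := mul_one _
  -- T5 bound
  have hT5 : |(x - (N:ℝ)^2)^l| ≤ 2^l * (x^(l-1) * s) := by
    calc |(x - (N:ℝ)^2)^l| = |x - (N:ℝ)^2|^l := abs_pow _ _
      _ ≤ (2*s)^l := pow_le_pow_left₀ (abs_nonneg _) (by rw [abs_of_nonneg hxN2a]; exact hxN2b) _
      _ = 2^l * s^l := mul_pow _ _ _
      _ ≤ 2^l * (x^(l-1) * s) :=
          mul_le_mul_of_nonneg_left hsl (by positivity)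
  -- T1 bound
  have hT1 : |(∑ m ∈ Finset.Icc 1 N, uu l x m) - ((∫ t in (0:ℝ)..N, uu l x t) + (uu l x N - uu l x 0)/2)|
      ≤ K2 * (x^(l-1) * s) := by
    refine le_trans htrap ?_
    calc (N:ℝ) * (K2 * x^(l-1) / 2) ≤ s * (K2 * x^(l-1) / 2) :=
          mul_le_mul_of_nonneg_right hNs (by positivity)
      _ ≤ K2 * (x^(l-1) * s) := by nlinarith [mul_nonneg hK2nn hE]
  -- uu 0
  have huu0 : uu l x 0 = x^l := by rw [uu]; norm_num
  -- put it together
  set a : ℝ := (4 ^ l * (l.factorial : ℝ)^2 / ((2*l+1).factorial)) with ha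
  have hkey : |(∑ m ∈ Finset.Icc 1 N, uu l x m)
      - (a * x ^ ((l:ℝ) + 1/2) - (((l:ℝ)+1)/2) * x^l)| ≤ Ctot * (x^(l-1) * s) := by
    have hl2 : ((l:ℝ))^2 * ((x^l - (x - (N:ℝ)^2)^l) / (2*l)) =
        ((l:ℝ)/2) * x^l - ((l:ℝ)/2) * (x - (N:ℝ)^2)^l := by
      have hlne : (l:ℝ) ≠ 0 := by positivity
      field_simp
    set T1 : ℝ := (∑ m ∈ Finset.Icc 1 N, uu l x m) - ((∫ t in (0:ℝ)..N, uu l x t) + (uu l x N - uu l x 0)/2) with hT1d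
    have hexp : (∑ m ∈ Finset.Icc 1 N, uu l x m)
        - (a * x ^ ((l:ℝ) + 1/2) - (((l:ℝ)+1)/2) * x^l)
        = T1 + (uu l x N)/2 + (∫ t in (0:ℝ)..N, Rf t)
          + (- ∫ t in (N:ℝ)..s, g1 t) + ((l:ℝ)/2) * (x - (N:ℝ)^2)^l := by
      rw [hT1d, hIresolve, hsplit_g1, hscale, hanti, hl2, huu0]
      ring
    rw [hexp]
    have habs : |T1 + (uu l x N)/2 + (∫ t in (0:ℝ)..N, Rf t)
          + (- ∫ t in (N:ℝ)..s, g1 t) + ((l:ℝ)/2) * (x - (N:ℝ)^2)^l|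
        ≤ |T1| + |uu l x N|/2 + |∫ t in (0:ℝ)..N, Rf t|
          + |∫ t in (N:ℝ)..s, g1 t| + ((l:ℝ)/2) * |(x - (N:ℝ)^2)^l| := by
      have := abs_add_le (T1 + (uu l x N)/2 + (∫ t in (0:ℝ)..N, Rf t) + (- ∫ t in (N:ℝ)..s, g1 t))
        (((l:ℝ)/2) * (x - (N:ℝ)^2)^l)
      have h2 := abs_add_le (T1 + (uu l x N)/2 + (∫ t in (0:ℝ)..N, Rf t)) (- ∫ t in (N:ℝ)..s, g1 t)
      have h3 := abs_add_le (T1 + (uu l x N)/2) (∫ t in (0:ℝ)..N, Rf t)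
      have h4 := abs_add_le T1 ((uu l x N)/2)
      rw [abs_neg] at h2
      rw [abs_div] at h4
      rw [abs_mul] at this
      have h5 : |(l:ℝ)/2| = (l:ℝ)/2 := abs_of_nonneg (by positivity)
      rw [h5] at this
      simp only [abs_two] at h4
      linarith
    refine le_trans habs ?_
    have e2 : |uu l x N|/2 ≤ (2+(l:ℝ))^l * (x^(l-1)*s) := by
      have : (0:ℝ) ≤ (2+(l:ℝ))^l * (x^(l-1)*s) := by positivity
      linarith [hT2]
    have e5 : ((l:ℝ)/2) * |(x - (N:ℝ)^2)^l| ≤ (l:ℝ) * 2^l * (x^(l-1)*s) := by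
      have h0 : (0:ℝ) ≤ (l:ℝ)/2 := by positivity
      have h6 := mul_le_mul_of_nonneg_left hT5 h0
      have h7 : (0:ℝ) ≤ (l:ℝ) * 2^l * (x^(l-1)*s) := by positivity
      have h8 : ((l:ℝ)/2) * (2^l * (x^(l-1)*s)) ≤ (l:ℝ) * 2^l * (x^(l-1)*s) := by
        have h10 : ((l:ℝ)/2) * (2^l * (x^(l-1)*s)) = (1/2) * ((l:ℝ) * 2^l * (x^(l-1)*s)) := by ring
        rw [h10]
        linarith
      linarith
    rw [hCtot]
    push_cast
    linarith [hT1, hT3, hT4]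
  -- finish : convert
  have hfinal : (∑ m ∈ Finset.Icc 1 N, (m : ℝ) ^ l * (x / (2 * m) - m / 2 - l / 2) ^ l)
      - (((l.factorial : ℝ) ^ 2 * 2 ^ l / ((2 * l + 1).factorial : ℝ)) *
            x ^ ((l : ℝ) + 1/2) - ((l + 1 : ℝ) / 2 ^ (l + 1)) * x ^ (l : ℕ))
      = (1/2^l) * ((∑ m ∈ Finset.Icc 1 N, uu l x m)
          - (a * x ^ ((l:ℝ) + 1/2) - (((l:ℝ)+1)/2) * x^l)) := by
    rw [hsum0, ha]
    have h4l : ((4:ℝ))^l = 2^l * 2^l := by rw [← mul_pow]; norm_num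
    rw [h4l]
    have h2l : ((2:ℝ))^l ≠ 0 := by positivity
    have hf : ((2*l+1).factorial : ℝ) ≠ 0 := by positivity
    field_simp
    ring
  rw [hfinal, abs_mul]
  have h2l1 : (1:ℝ) ≤ 2^l := one_le_pow₀ (by norm_num : (1:ℝ) ≤ 2)
  have hq : |(1:ℝ)/2^l| ≤ 1 := by
    rw [abs_of_nonneg (by positivity : (0:ℝ) ≤ (1:ℝ)/2^l)]
    rw [div_le_one (by positivity)]
    exact h2l1
  have hEeq : x^(l-1) * s = x ^ ((l : ℝ) - 1/2) := by
    rw [hs, show ((l:ℝ) - 1/2) = ((l-1:ℕ):ℝ) + 1/2 by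
      push_cast [Nat.cast_sub hl]; ring]
    rw [Real.rpow_add hx0, Real.rpow_natCast, Real.sqrt_eq_rpow]
  calc |(1:ℝ)/2^l| * |(∑ m ∈ Finset.Icc 1 N, uu l x m)
          - (a * x ^ ((l:ℝ) + 1/2) - (((l:ℝ)+1)/2) * x^l)|
      ≤ 1 * (Ctot * (x^(l-1) * s)) := by
        have h0 : (0:ℝ) ≤ Ctot * (x^(l-1)*s) := le_trans (abs_nonneg _) hkey
        exact mul_le_mul hq hkey (abs_nonneg _) (by norm_num)
    _ = Ctot * x ^ ((l : ℝ) - 1/2) := by rw [one_mul, hEeq]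
end U
end

section
/- Fix an integer l ≥ 2. For large real x, ∑_{1 ≤ m ≤ √x} m^l·(x/(2m) − m/2 − l/2)^{l−1} = x^l/(2^l · l) + O(x^{l−1/2}), with implied constant depending only on l. -/
open Real Finset

private lemma pow_succ_sub_le' (n : ℕ) {a b X : ℝ} (hb : 0 ≤ b) (hba : b ≤ a) (haX : a ≤ X) :
    a ^ (n+1) - b ^ (n+1) ≤ (n+1) * (a - b) * X ^ n := by
  induction n with
  | zero => norm_num
  | succ n ih =>
      have ha : 0 ≤ a := hb.trans hba
      have hX : 0 ≤ X := ha.trans haX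
      have hpow : b ^ (n+1) ≤ a ^ (n+1) := pow_le_pow_left₀ hb hba (n+1)
      have hpow2 : b ^ (n+1) ≤ X ^ (n+1) := pow_le_pow_left₀ hb (hba.trans haX) (n+1)
      have h2 : a * (a ^ (n+1) - b ^ (n+1)) ≤ X * ((n+1) * (a - b) * X ^ n) :=
        mul_le_mul haX ih (by linarith) hX
      have h3 : (a - b) * b ^ (n+1) ≤ (a - b) * X ^ (n+1) :=
        mul_le_mul_of_nonneg_left hpow2 (by linarith)
      push_cast
      calc a ^ (n+1+1) - b ^ (n+1+1)
          = a * (a ^ (n+1) - b ^ (n+1)) + (a - b) * b ^ (n+1) := by ring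
        _ ≤ X * ((n+1) * (a - b) * X ^ n) + (a - b) * X ^ (n+1) := add_le_add h2 h3
        _ = ((n:ℝ)+1+1) * (a - b) * X ^ (n+1) := by ring

private lemma le_pow_succ_sub' (n : ℕ) {a b : ℝ} (hb : 0 ≤ b) (hba : b ≤ a) :
    (n+1) * (a - b) * b ^ n ≤ a ^ (n+1) - b ^ (n+1) := by
  induction n with
  | zero => norm_num
  | succ n ih =>
      have ha : 0 ≤ a := hb.trans hba
      have hpow : b ^ (n+1) ≤ a ^ (n+1) := pow_le_pow_left₀ hb hba (n+1)
      have h2 : b * ((n+1) * (a - b) * b ^ n) ≤ b * (a ^ (n+1) - b ^ (n+1)) :=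
        mul_le_mul_of_nonneg_left ih hb
      have h3 : b * (a ^ (n+1) - b ^ (n+1)) ≤ a * (a ^ (n+1) - b ^ (n+1)) :=
        mul_le_mul_of_nonneg_right hba (by linarith)
      push_cast
      calc ((n:ℝ)+1+1) * (a - b) * b ^ (n+1)
          = b * ((n+1) * (a - b) * b ^ n) + (a - b) * b ^ (n+1) := by ring
        _ ≤ a * (a ^ (n+1) - b ^ (n+1)) + (a - b) * b ^ (n+1) := by linarith
        _ = a ^ (n+1+1) - b ^ (n+1+1) := by ring

set_option maxHeartbeats 1600000 in
/-- `∑_{1 ≤ m ≤ √x} m^l (x/(2m) − m/2 − l/2)^{l−1} = x^l/(2^l l) + O(x^{l−1/2})`. -/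
theorem sum_m_power_l_sub_one (l : ℕ) (hl : 2 ≤ l) :
    ∃ C x₀ : ℝ, 0 < C ∧ 1 ≤ x₀ ∧ ∀ x : ℝ, x₀ ≤ x →
      |(∑ m ∈ Finset.Icc 1 ⌊Real.sqrt x⌋₊,
          (m : ℝ) ^ l * (x / (2 * m) - m / 2 - l / 2) ^ (l - 1)) -
        x ^ (l : ℕ) / (2 ^ l * l)| ≤ C * x ^ ((l : ℝ) - 1/2) := by
  obtain ⟨j, rfl⟩ : ∃ j, l = j + 2 := ⟨l - 2, by omega⟩
  refine ⟨4*((j:ℝ)+1) + 4*((j:ℝ)+3) + ((j:ℝ)+5)^(j+2), ((j:ℝ)+4)^2, by positivity,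
    by nlinarith [Nat.cast_nonneg (α := ℝ) j], ?_⟩
  intro x hx
  set Y := Real.sqrt x with hYdef
  have hj0 : (0:ℝ) ≤ (j:ℝ) := Nat.cast_nonneg j
  have hx1 : (1:ℝ) ≤ x := le_trans (by nlinarith) hx
  have hx0 : (0:ℝ) ≤ x := by linarith
  have hY4 : (j:ℝ) + 4 ≤ Y := by
    have h1 : Real.sqrt (((j:ℝ)+4)^2) ≤ Y := Real.sqrt_le_sqrt hx
    rwa [Real.sqrt_sq (by positivity)] at h1
  have hY1 : (1:ℝ) ≤ Y := by nlinarith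
  have hY0 : (0:ℝ) ≤ Y := by linarith
  have hYx : Y^2 = x := Real.sq_sqrt hx0
  set N := ⌊Y⌋₊ with hNdef
  have hNY : (N:ℝ) ≤ Y := Nat.floor_le hY0
  have hYN1 : Y < N + 1 := Nat.lt_floor_add_one Y
  have hN : j + 4 ≤ N := Nat.le_floor (by push_cast; linarith)
  set M := N - (j + 3) with hMdef
  have hMN : M + (j+3) = N := by omega
  have hMcast : (M:ℝ) + ((j:ℝ)+3) = N := by exact_mod_cast congrArg (Nat.cast (R := ℝ)) hMN
  have hMY : (M:ℝ) ≤ Y := by linarith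
  set a : ℕ → ℝ := fun m : ℕ => x - (m:ℝ)^2 - ((j:ℝ)+2)*(m:ℝ) with ha
  clear_value Y N M a
  have hxpow : ∀ n : ℕ, x ^ n = Y ^ (2*n) := by
    intro n; rw [← hYx, ← pow_mul]
  have hYmono : ∀ p q : ℕ, p ≤ q → Y ^ p ≤ Y ^ q := fun p q h => pow_le_pow_right₀ hY1 h
  -- Step 1 : rewrite the sum
  have hsum : (∑ m ∈ Finset.Icc 1 N,
        (m : ℝ) ^ (j+2) * (x / (2 * m) - m / 2 - ((j+2:ℕ):ℝ) / 2) ^ (j+2 - 1))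
      = (∑ i ∈ Finset.range N, ((1+i:ℕ):ℝ) * a (1+i) ^ (j+1)) / 2^(j+1) := by
    rw [Finset.sum_div]
    rw [← Finset.Ico_add_one_right_eq_Icc, Finset.sum_Ico_eq_sum_range]
    apply Finset.sum_congr rfl
    intro i _
    have hm0 : ((1+i:ℕ):ℝ) ≠ 0 := by positivity
    have key : x / (2 * ((1+i:ℕ):ℝ)) - ((1+i:ℕ):ℝ) / 2 - ((j+2:ℕ):ℝ) / 2
        = a (1+i) / (2 * ((1+i:ℕ):ℝ)) := by
      simp only [ha]; push_cast; field_simp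
    rw [show j + 2 - 1 = j + 1 from rfl, key, div_pow, mul_pow]
    rw [pow_succ ((1+i:ℕ):ℝ) (j+1)]
    field_simp
  -- facts about a
  have h_a_le : ∀ k : ℕ, a k ≤ x := by
    intro k; simp only [ha]
    nlinarith [sq_nonneg ((k:ℝ)), Nat.cast_nonneg (α := ℝ) k]
  have h_a_nonneg : ∀ k : ℕ, k ≤ M + 1 → 0 ≤ a k := by
    intro k hk
    have hk1 : (k:ℝ) ≤ N := Nat.cast_le.mpr (by omega : k ≤ N)
    have hk2 : (k:ℝ) + ((j:ℝ)+2) ≤ N := by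
      have h : k + (j+2) ≤ N := by omega
      have := Nat.cast_le (α := ℝ).mpr h
      push_cast at this; linarith
    have hk0 : (0:ℝ) ≤ k := Nat.cast_nonneg k
    simp only [ha]
    nlinarith [mul_le_mul hk2 hk1 hk0 (le_trans hk0 hk1),
      mul_le_mul hNY hNY (Nat.cast_nonneg N) hY0]
  have h_abs_a : ∀ k : ℕ, k ≤ N → |a k| ≤ x := by
    intro k hk
    have hk1 : (k:ℝ) ≤ Y := le_trans (Nat.cast_le.mpr hk) hNY
    have hk0 : (0:ℝ) ≤ k := Nat.cast_nonneg k
    have hj2Y : (j:ℝ)+2 ≤ Y := by linarith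
    simp only [ha]
    rw [abs_le]
    constructor
    · nlinarith [mul_le_mul hk1 hk1 hk0 hY0, mul_le_mul hj2Y hk1 hk0 hY0]
    · nlinarith [sq_nonneg ((k:ℝ)), mul_nonneg (by linarith : (0:ℝ) ≤ (j:ℝ)+2) hk0]
  have h_a_diff : ∀ m : ℕ, a m - a (m+1) = 2*(m:ℝ) + (j:ℝ) + 3 := by
    intro m; simp only [ha]; push_cast; ring
  -- split the sum
  have hsplit : (∑ i ∈ Finset.range N, ((1+i:ℕ):ℝ) * a (1+i) ^ (j+1))
      = (∑ i ∈ Finset.range M, ((1+i:ℕ):ℝ) * a (1+i) ^ (j+1))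
        + ∑ i ∈ Finset.Ico M N, ((1+i:ℕ):ℝ) * a (1+i) ^ (j+1) := by
    rw [Finset.range_eq_Ico, ← Finset.sum_Ico_consecutive _ (Nat.zero_le M) (by omega : M ≤ N),
      ← Finset.range_eq_Ico]
  -- tail bound
  have h_tail : |∑ i ∈ Finset.Ico M N, ((1+i:ℕ):ℝ) * a (1+i) ^ (j+1)|
      ≤ ((j:ℝ)+3) * Y^(2*j+3) := by
    calc |∑ i ∈ Finset.Ico M N, ((1+i:ℕ):ℝ) * a (1+i) ^ (j+1)|
        ≤ ∑ i ∈ Finset.Ico M N, |((1+i:ℕ):ℝ) * a (1+i) ^ (j+1)| :=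
          Finset.abs_sum_le_sum_abs _ _
      _ ≤ ∑ i ∈ Finset.Ico M N, Y^(2*j+3) := by
          apply Finset.sum_le_sum
          intro i hi
          obtain ⟨hi1, hi2⟩ := Finset.mem_Ico.mp hi
          have h1i : 1 + i ≤ N := by omega
          have hcast : ((1+i:ℕ):ℝ) ≤ Y := le_trans (Nat.cast_le.mpr h1i) hNY
          have habs : |a (1+i)| ≤ x := h_abs_a (1+i) h1i
          rw [abs_mul, abs_pow]
          calc |((1+i:ℕ):ℝ)| * |a (1+i)|^(j+1) ≤ Y * x^(j+1) := by
                apply mul_le_mul _ (pow_le_pow_left₀ (abs_nonneg _) habs (j+1)) (by positivity) hY0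
                rw [abs_of_nonneg (by positivity)]; exact hcast
            _ = Y^(2*j+3) := by rw [hxpow (j+1)]; ring
      _ = (Finset.Ico M N).card • Y^(2*j+3) := Finset.sum_const _
      _ = ((j:ℝ)+3) * Y^(2*j+3) := by
          rw [Nat.card_Ico, nsmul_eq_mul]
          have hc : N - M = j + 3 := by omega
          rw [hc]; push_cast; ring
  -- decomposition of the main part
  set P : ℝ := ∑ i ∈ Finset.range M, (a (1+i) - a (1+i+1)) * a (1+i) ^ (j+1) with hP
  set Q : ℝ := ∑ i ∈ Finset.range M, a (1+i) ^ (j+1) with hQ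
  clear_value P Q
  have hmain : (∑ i ∈ Finset.range M, ((1+i:ℕ):ℝ) * a (1+i) ^ (j+1))
      = (P - ((j:ℝ)+3) * Q)/2 := by
    rw [hP, hQ, Finset.mul_sum, ← Finset.sum_sub_distrib, Finset.sum_div]
    apply Finset.sum_congr rfl
    intro i _
    rw [h_a_diff (1+i)]
    push_cast
    ring
  -- telescoping
  have htel : (∑ i ∈ Finset.range M, (a (1+i)^(j+2) - a (1+(i+1))^(j+2)))
      = a 1^(j+2) - a (1+M)^(j+2) := by
    simpa using Finset.sum_range_sub' (fun i => a (1+i)^(j+2)) M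
  have hPT : |((j:ℝ)+2) * P - (a 1^(j+2) - a (1+M)^(j+2))|
      ≤ 4*((j:ℝ)+1)*((j:ℝ)+2) * Y^(2*j+3) := by
    rw [← htel, hP, Finset.mul_sum, ← Finset.sum_sub_distrib]
    calc |∑ i ∈ Finset.range M, (((j:ℝ)+2) * ((a (1+i) - a (1+i+1)) * a (1+i) ^ (j+1))
            - (a (1+i)^(j+2) - a (1+(i+1))^(j+2)))|
        ≤ ∑ i ∈ Finset.range M, |((j:ℝ)+2) * ((a (1+i) - a (1+i+1)) * a (1+i) ^ (j+1))
            - (a (1+i)^(j+2) - a (1+(i+1))^(j+2))| := Finset.abs_sum_le_sum_abs _ _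
      _ ≤ ∑ i ∈ Finset.range M, 4*((j:ℝ)+1)*((j:ℝ)+2) * Y^(2*j+2) := by
          apply Finset.sum_le_sum
          intro i hi
          have hiM : i < M := Finset.mem_range.mp hi
          have hidx : 1+(i+1) = (1+i)+1 := by omega
          rw [hidx]
          set A := a (1+i) with hA
          set B := a ((1+i)+1) with hB
          have hBnn : 0 ≤ B := h_a_nonneg ((1+i)+1) (by omega)
          have hD : A - B = 2*((1+i:ℕ):ℝ) + (j:ℝ) + 3 := h_a_diff (1+i)
          have hBA : B ≤ A := by rw [← sub_nonneg, hD]; positivity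
          have hAx : A ≤ x := h_a_le (1+i)
          have hDY : A - B ≤ 2*Y := by
            rw [hD]
            have h1 : ((1+i:ℕ):ℝ) ≤ M := Nat.cast_le.mpr (by omega : 1+i ≤ M)
            push_cast at h1 ⊢
            nlinarith
          have hD0 : 0 ≤ A - B := by linarith
          have hlow : A^(j+2) - B^(j+2) ≤ ((j:ℝ)+2) * (A - B) * A^(j+1) := by
            have h := pow_succ_sub_le' (j+1) hBnn hBA (le_refl A)
            push_cast at h
            ring_nf at h ⊢
            linarith
          have hup : ((j:ℝ)+2) * (A - B) * A^(j+1) - (A^(j+2) - B^(j+2))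
              ≤ 4*((j:ℝ)+1)*((j:ℝ)+2) * Y^(2*j+2) := by
            have h1 : ((j:ℝ)+2) * (A - B) * B^(j+1) ≤ A^(j+2) - B^(j+2) := by
              have h := le_pow_succ_sub' (j+1) hBnn hBA
              push_cast at h
              ring_nf at h ⊢
              linarith
            have h2 : A^(j+1) - B^(j+1) ≤ ((j:ℝ)+1) * (A - B) * x^j := by
              have h := pow_succ_sub_le' j hBnn hBA hAx
              push_cast at h
              linarith
            have h3 : ((j:ℝ)+2) * (A - B) * A^(j+1) - (A^(j+2) - B^(j+2))
                ≤ ((j:ℝ)+2) * (A - B) * (A^(j+1) - B^(j+1)) := by nlinarith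
            have h4 : ((j:ℝ)+2) * (A - B) * (A^(j+1) - B^(j+1))
                ≤ ((j:ℝ)+2) * (A - B) * (((j:ℝ)+1) * (A - B) * x^j) :=
              mul_le_mul_of_nonneg_left h2 (by positivity)
            have h5 : ((j:ℝ)+2) * (A - B) * (((j:ℝ)+1) * (A - B) * x^j)
                ≤ ((j:ℝ)+2) * (2*Y) * (((j:ℝ)+1) * (2*Y) * x^j) := by
              have hsq : (A-B)*(A-B) ≤ (2*Y)*(2*Y) :=
                mul_le_mul hDY hDY hD0 (by positivity)
              calc ((j:ℝ)+2) * (A - B) * (((j:ℝ)+1) * (A - B) * x^j)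
                  = (((j:ℝ)+2) * (((j:ℝ)+1) * x^j)) * ((A-B)*(A-B)) := by ring
                _ ≤ (((j:ℝ)+2) * (((j:ℝ)+1) * x^j)) * ((2*Y)*(2*Y)) :=
                    mul_le_mul_of_nonneg_left hsq (by positivity)
                _ = ((j:ℝ)+2) * (2*Y) * (((j:ℝ)+1) * (2*Y) * x^j) := by ring
            have h6 : ((j:ℝ)+2) * (2*Y) * (((j:ℝ)+1) * (2*Y) * x^j)
                = 4*((j:ℝ)+1)*((j:ℝ)+2) * Y^(2*j+2) := by
              rw [hxpow j]; ring
            linarith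
          rw [abs_sub_le_iff]
          refine ⟨by linarith, ?_⟩
          have hz : (0:ℝ) ≤ 4*((j:ℝ)+1)*((j:ℝ)+2) * Y^(2*j+2) := by positivity
          linarith
      _ = (M:ℝ) * (4*((j:ℝ)+1)*((j:ℝ)+2) * Y^(2*j+2)) := by
          rw [Finset.sum_const, nsmul_eq_mul, Finset.card_range]
      _ ≤ Y * (4*((j:ℝ)+1)*((j:ℝ)+2) * Y^(2*j+2)) :=
          mul_le_mul_of_nonneg_right hMY (by positivity)
      _ = 4*((j:ℝ)+1)*((j:ℝ)+2) * Y^(2*j+3) := by ring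
  -- endpoint bounds
  have h_a1 : x^(j+2) - a 1^(j+2) ≤ ((j:ℝ)+2)*((j:ℝ)+3)*x^(j+1) := by
    have h1 : 0 ≤ a 1 := h_a_nonneg 1 (by omega)
    have h2 : a 1 ≤ x := h_a_le 1
    have h3 : x - a 1 = (j:ℝ) + 3 := by simp only [ha]; push_cast; ring
    have h := pow_succ_sub_le' (j+1) h1 h2 (le_refl x)
    push_cast at h
    rw [h3] at h
    ring_nf at h ⊢
    linarith
  have h_a1_le : a 1 ^(j+2) ≤ x^(j+2) :=
    pow_le_pow_left₀ (h_a_nonneg 1 (by omega)) (h_a_le 1) (j+2)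
  have h_aM1_nn : 0 ≤ a (1+M) := h_a_nonneg (1+M) (by omega)
  have h_aM1 : a (1+M) ≤ ((j:ℝ)+5) * Y := by
    have hKcast : ((1+M:ℕ):ℝ) = (N:ℝ) - ((j:ℝ)+2) := by push_cast; linarith
    simp only [ha]
    rw [hKcast]
    have hx_lt : x < ((N:ℝ)+1)^2 := by nlinarith
    have hN1 : (1:ℝ) ≤ N := by
      have h : (1:ℕ) ≤ N := by omega
      exact_mod_cast h
    nlinarith [mul_nonneg (by linarith : (0:ℝ) ≤ (j:ℝ)+4) (by linarith : (0:ℝ) ≤ Y - (N:ℝ))]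
  have h_aM1_pow : a (1+M)^(j+2) ≤ ((j:ℝ)+5)^(j+2) * Y^(2*j+3) := by
    calc a (1+M)^(j+2) ≤ (((j:ℝ)+5) * Y)^(j+2) :=
          pow_le_pow_left₀ h_aM1_nn h_aM1 (j+2)
      _ = ((j:ℝ)+5)^(j+2) * Y^(j+2) := mul_pow _ _ _
      _ ≤ ((j:ℝ)+5)^(j+2) * Y^(2*j+3) :=
          mul_le_mul_of_nonneg_left (hYmono _ _ (by omega)) (by positivity)
  -- Q bounds
  have hQ0 : 0 ≤ Q := by
    rw [hQ]
    apply Finset.sum_nonneg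
    intro i hi
    have hnn : 0 ≤ a (1+i) := h_a_nonneg (1+i) (by have := Finset.mem_range.mp hi; omega)
    positivity
  have hQle : Q ≤ Y^(2*j+3) := by
    rw [hQ]
    calc (∑ i ∈ Finset.range M, a (1+i) ^ (j+1)) ≤ ∑ i ∈ Finset.range M, x^(j+1) := by
          apply Finset.sum_le_sum
          intro i hi
          have hiM := Finset.mem_range.mp hi
          exact pow_le_pow_left₀ (h_a_nonneg (1+i) (by omega)) (h_a_le (1+i)) (j+1)
      _ = (M:ℝ) * x^(j+1) := by rw [Finset.sum_const, nsmul_eq_mul, Finset.card_range]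
      _ ≤ Y * Y^(2*j+2) := by
          rw [hxpow (j+1), show 2*(j+1) = 2*j+2 from rfl]
          exact mul_le_mul_of_nonneg_right hMY (by positivity)
      _ = Y^(2*j+3) := by ring
  -- |P - x^{j+2}/(j+2)|
  have hj2 : (1:ℝ) ≤ (j:ℝ)+2 := by linarith
  have hPW : |P - x^(j+2)/((j:ℝ)+2)|
      ≤ (4*((j:ℝ)+1) + ((j:ℝ)+3) + ((j:ℝ)+5)^(j+2)) * Y^(2*j+3) := by
    have hb1 : x^(j+1) ≤ Y^(2*j+3) := by
      rw [hxpow (j+1)]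
      exact hYmono _ _ (by omega)
    have hTd : |(a 1^(j+2) - a (1+M)^(j+2)) - x^(j+2)|
        ≤ (((j:ℝ)+2)*((j:ℝ)+3) + ((j:ℝ)+5)^(j+2)) * Y^(2*j+3) := by
      rw [abs_le]
      constructor
      · nlinarith [h_aM1_pow, pow_nonneg h_aM1_nn (j+2), pow_nonneg hY0 (2*j+3),
          mul_le_mul_of_nonneg_left hb1 (by positivity : (0:ℝ) ≤ ((j:ℝ)+2)*((j:ℝ)+3))]
      · nlinarith [h_a1_le, h_aM1_pow, pow_nonneg h_aM1_nn (j+2),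
          mul_le_mul_of_nonneg_left hb1 (by positivity : (0:ℝ) ≤ ((j:ℝ)+2)*((j:ℝ)+3)),
          pow_nonneg hY0 (2*j+3), pow_nonneg (by positivity : (0:ℝ) ≤ (j:ℝ)+5) (j+2)]
    have hne2 : ((j:ℝ)+2) ≠ 0 := by positivity
    have key : |((j:ℝ)+2) * (P - x^(j+2)/((j:ℝ)+2))|
        ≤ (4*((j:ℝ)+1)*((j:ℝ)+2) + ((j:ℝ)+2)*((j:ℝ)+3) + ((j:ℝ)+5)^(j+2)) * Y^(2*j+3) := by
      have heq : ((j:ℝ)+2) * (P - x^(j+2)/((j:ℝ)+2))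
          = (((j:ℝ)+2) * P - (a 1^(j+2) - a (1+M)^(j+2)))
            + ((a 1^(j+2) - a (1+M)^(j+2)) - x^(j+2)) := by
        field_simp
        ring
      rw [heq]
      calc |(((j:ℝ)+2) * P - (a 1^(j+2) - a (1+M)^(j+2)))
            + ((a 1^(j+2) - a (1+M)^(j+2)) - x^(j+2))|
          ≤ |((j:ℝ)+2) * P - (a 1^(j+2) - a (1+M)^(j+2))|
            + |(a 1^(j+2) - a (1+M)^(j+2)) - x^(j+2)| := abs_add_le _ _
        _ ≤ 4*((j:ℝ)+1)*((j:ℝ)+2) * Y^(2*j+3)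
            + (((j:ℝ)+2)*((j:ℝ)+3) + ((j:ℝ)+5)^(j+2)) * Y^(2*j+3) := add_le_add hPT hTd
        _ = (4*((j:ℝ)+1)*((j:ℝ)+2) + ((j:ℝ)+2)*((j:ℝ)+3) + ((j:ℝ)+5)^(j+2)) * Y^(2*j+3) := by
            ring
    rw [abs_mul, abs_of_nonneg (by positivity : (0:ℝ) ≤ (j:ℝ)+2)] at key
    have hYp : (0:ℝ) ≤ Y^(2*j+3) := by positivity
    have hpow5 : (0:ℝ) ≤ ((j:ℝ)+5)^(j+2) := by positivity
    nlinarith [abs_nonneg (P - x^(j+2)/((j:ℝ)+2)),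
      mul_nonneg (mul_nonneg (by linarith : (0:ℝ) ≤ (j:ℝ)+1) hpow5) hYp]
  -- final assembly
  have hgoal_eq : (∑ m ∈ Finset.Icc 1 N,
        (m : ℝ) ^ (j+2) * (x / (2 * m) - m / 2 - ((j+2:ℕ):ℝ) / 2) ^ (j+2 - 1))
        - x ^ (j+2) / (2 ^ (j+2) * ((j+2:ℕ):ℝ))
      = ((P - x^(j+2)/((j:ℝ)+2)) - ((j:ℝ)+3) * Q
          + 2 * (∑ i ∈ Finset.Ico M N, ((1+i:ℕ):ℝ) * a (1+i) ^ (j+1))) / 2^(j+2) := by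
    rw [hsum, hsplit, hmain]
    have hcast : ((j+2:ℕ):ℝ) = (j:ℝ)+2 := by push_cast; ring
    rw [hcast]
    have hne1 : ((2:ℝ)^(j+1)) ≠ 0 := by positivity
    have hne2 : ((j:ℝ)+2) ≠ 0 := by positivity
    have hne3 : ((2:ℝ)^(j+2)) ≠ 0 := by positivity
    field_simp
    ring
  rw [hgoal_eq]
  have hfin : x ^ (((j+2:ℕ):ℝ) - 1/2) = Y ^ (2*j+3) := by
    have hexp : ((j+2:ℕ):ℝ) - 1/2 = (1/2 : ℝ) * ((2*j+3 : ℕ) : ℝ) := by push_cast; ring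
    rw [hexp, Real.rpow_mul hx0, Real.rpow_natCast, hYdef, Real.sqrt_eq_rpow]
  rw [hfin]
  -- numerator bound
  rw [abs_div, abs_of_nonneg (by positivity : (0:ℝ) ≤ (2:ℝ)^(j+2))]
  have h2pow : (1:ℝ) ≤ (2:ℝ)^(j+2) := by simpa using pow_le_pow_left₀ (by norm_num : (0:ℝ) ≤ 1) (by norm_num : (1:ℝ) ≤ 2) (j+2)
  have hQabs : |((j:ℝ)+3) * Q| ≤ ((j:ℝ)+3) * Y^(2*j+3) := by
    rw [abs_mul, abs_of_nonneg (by positivity : (0:ℝ) ≤ (j:ℝ)+3), abs_of_nonneg hQ0]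
    exact mul_le_mul_of_nonneg_left hQle (by positivity)
  have hnum : |(P - x^(j+2)/((j:ℝ)+2)) - ((j:ℝ)+3) * Q
        + 2 * (∑ i ∈ Finset.Ico M N, ((1+i:ℕ):ℝ) * a (1+i) ^ (j+1))|
      ≤ (4*((j:ℝ)+1) + 4*((j:ℝ)+3) + ((j:ℝ)+5)^(j+2)) * Y^(2*j+3) := by
    calc |(P - x^(j+2)/((j:ℝ)+2)) - ((j:ℝ)+3) * Q
          + 2 * (∑ i ∈ Finset.Ico M N, ((1+i:ℕ):ℝ) * a (1+i) ^ (j+1))|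
        ≤ |(P - x^(j+2)/((j:ℝ)+2)) - ((j:ℝ)+3) * Q|
          + |2 * (∑ i ∈ Finset.Ico M N, ((1+i:ℕ):ℝ) * a (1+i) ^ (j+1))| := abs_add_le _ _
      _ ≤ (|P - x^(j+2)/((j:ℝ)+2)| + |((j:ℝ)+3) * Q|)
          + |2 * (∑ i ∈ Finset.Ico M N, ((1+i:ℕ):ℝ) * a (1+i) ^ (j+1))| :=
          add_le_add (abs_sub _ _) le_rfl
      _ ≤ ((4*((j:ℝ)+1) + ((j:ℝ)+3) + ((j:ℝ)+5)^(j+2)) * Y^(2*j+3) + ((j:ℝ)+3) * Y^(2*j+3))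
          + 2 * (((j:ℝ)+3) * Y^(2*j+3)) := by
          refine add_le_add (add_le_add hPW hQabs) ?_
          rw [abs_mul, abs_of_nonneg (by norm_num : (0:ℝ) ≤ (2:ℝ))]
          exact mul_le_mul_of_nonneg_left h_tail (by norm_num)
      _ = (4*((j:ℝ)+1) + 4*((j:ℝ)+3) + ((j:ℝ)+5)^(j+2)) * Y^(2*j+3) := by ring
  calc |(P - x^(j+2)/((j:ℝ)+2)) - ((j:ℝ)+3) * Q
        + 2 * (∑ i ∈ Finset.Ico M N, ((1+i:ℕ):ℝ) * a (1+i) ^ (j+1))| / 2^(j+2)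
      ≤ |(P - x^(j+2)/((j:ℝ)+2)) - ((j:ℝ)+3) * Q
        + 2 * (∑ i ∈ Finset.Ico M N, ((1+i:ℕ):ℝ) * a (1+i) ^ (j+1))| / 1 := by
        apply div_le_div_of_nonneg_left (abs_nonneg _) (by norm_num) h2pow
    _ = |(P - x^(j+2)/((j:ℝ)+2)) - ((j:ℝ)+3) * Q
        + 2 * (∑ i ∈ Finset.Ico M N, ((1+i:ℕ):ℝ) * a (1+i) ^ (j+1))| := div_one _
    _ ≤ (4*((j:ℝ)+1) + 4*((j:ℝ)+3) + ((j:ℝ)+5)^(j+2)) * Y^(2*j+3) := hnum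
end

section
/- For l = 1 and large real x, the counting function N_II(2πx) := ∑_{m ≥ 1, n ≥ 0, m² + m(2n+1) ≤ x} 2m satisfies N_II(2πx) = (2/3)·x^{3/2} − x/2 − ∑_{1 ≤ m ≤ √x} 2m·ψ(x/(2m) − m/2 + 1/2) + O(√x), where ψ(t) = {t} − 1/2. -/
open Real Finset

private lemma natFloor_cast_real {a : ℝ} (h : 0 ≤ a) : ((⌊a⌋₊:ℝ)) = a - Int.fract a := by
  rw [Int.self_sub_fract, ← Int.floor_toNat]
  exact_mod_cast congrArg (fun z : ℤ => (z:ℝ)) (Int.toNat_of_nonneg (Int.floor_nonneg.mpr h))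

private lemma sum_sq_Icc (K : ℕ) :
    ∑ m ∈ Finset.Icc 1 K, (m:ℝ)^2 = K*(K+1)*(2*K+1)/6 := by
  induction K with
  | zero => simp
  | succ n ih =>
    rw [Finset.sum_Icc_succ_top (by omega), ih]
    push_cast; ring

private lemma count_inner (x : ℝ) (hx : 1 ≤ x) (m : ℕ) (hm : 1 ≤ m) :
    ((Finset.range (⌊x⌋₊ + 1)).filter
        (fun n => ((m ^ 2 + m * (2 * n + 1) : ℕ) : ℝ) ≤ x)).card
      = ⌊(x + m - m^2) / (2*m)⌋₊ := by
  have hm0 : (0:ℝ) < 2*m := by positivity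
  set v : ℝ := (x + m - m^2) / (2*m) with hv
  have hiff : ∀ n : ℕ, (((m ^ 2 + m * (2 * n + 1) : ℕ) : ℝ) ≤ x ↔ n + 1 ≤ ⌊v⌋₊) := by
    intro n
    have h1 : (((m ^ 2 + m * (2 * n + 1) : ℕ) : ℝ) ≤ x) ↔ ((n:ℝ) + 1 ≤ v) := by
      rw [hv, le_div_iff₀ hm0]
      push_cast
      constructor <;> intro h <;> nlinarith
    rw [h1]
    constructor
    · intro h
      exact_mod_cast Nat.le_floor (by exact_mod_cast h)
    · intro h
      have hv0 : 0 ≤ v := by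
        by_contra hneg
        push_neg at hneg
        have : ⌊v⌋₊ = 0 := Nat.floor_eq_zero.mpr (by linarith)
        omega
      have := Nat.floor_le hv0
      have h2 : ((n+1 : ℕ):ℝ) ≤ (⌊v⌋₊ : ℝ) := by exact_mod_cast h
      push_cast at h2
      linarith
  have hvle : v ≤ x := by
    rw [hv, div_le_iff₀ hm0]
    have : (1:ℝ) ≤ m := by exact_mod_cast hm
    nlinarith
  have hfloorle : ⌊v⌋₊ ≤ ⌊x⌋₊ := Nat.floor_mono hvle
  have : (Finset.range (⌊x⌋₊ + 1)).filter
      (fun n => ((m ^ 2 + m * (2 * n + 1) : ℕ) : ℝ) ≤ x) = Finset.range ⌊v⌋₊ := by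
    ext n
    simp only [Finset.mem_filter, Finset.mem_range]
    constructor
    · rintro ⟨_, h⟩
      have := (hiff n).mp h; omega
    · intro h
      exact ⟨by omega, (hiff n).mpr (by omega)⟩
  rw [this, Finset.card_range]

set_option maxHeartbeats 1600000 in
/-- For the 3-dimensional Heisenberg manifold (`l = 1`):
`N_II(2πx) = (2/3)x^{3/2} − x/2 − ∑_{1 ≤ m ≤ √x} 2m ψ(x/(2m) − m/2 + 1/2) + O(√x)`,
where `N_II(2πx) = ∑_{m ≥ 1, n ≥ 0, m² + m(2n+1) ≤ x} 2m` and `ψ(t) = {t} − 1/2`. -/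
theorem NII_asymptotic_l_eq_one :
    ∃ C x₀ : ℝ, 0 < C ∧ 1 ≤ x₀ ∧ ∀ x : ℝ, x₀ ≤ x →
      |(∑ p ∈ (Finset.Icc 1 ⌊x⌋₊ ×ˢ Finset.range (⌊x⌋₊ + 1)).filter
            (fun p : ℕ × ℕ => ((p.1 ^ 2 + p.1 * (2 * p.2 + 1) : ℕ) : ℝ) ≤ x),
          (2 * p.1 : ℝ)) -
        ((2/3) * x ^ ((3:ℝ)/2) - x / 2 -
          ∑ m ∈ Finset.Icc 1 ⌊Real.sqrt x⌋₊,
            2 * (m : ℝ) * (Int.fract (x / (2 * m) - m / 2 + 1/2) - 1/2))|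
        ≤ C * Real.sqrt x := by
  refine ⟨1, 4, one_pos, by norm_num, fun x hx => ?_⟩
  have hx1 : (1:ℝ) ≤ x := by linarith
  have hx0 : (0:ℝ) ≤ x := by linarith
  set s := Real.sqrt x with hs
  set K := ⌊s⌋₊ with hK
  have hs2 : s^2 = x := Real.sq_sqrt hx0
  have hsge : (2:ℝ) ≤ s := by
    rw [hs, show (2:ℝ) = Real.sqrt 4 by rw [show (4:ℝ) = 2^2 by norm_num, Real.sqrt_sq]; norm_num]
    exact Real.sqrt_le_sqrt hx
  have hsnn : (0:ℝ) ≤ s := Real.sqrt_nonneg x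
  have hkle : (K:ℝ) ≤ s := Nat.floor_le hsnn
  have hslt : s < K + 1 := Nat.lt_floor_add_one s
  -- Step 1: double sum to single sum of floors
  have hN : (∑ p ∈ (Finset.Icc 1 ⌊x⌋₊ ×ˢ Finset.range (⌊x⌋₊ + 1)).filter
            (fun p : ℕ × ℕ => ((p.1 ^ 2 + p.1 * (2 * p.2 + 1) : ℕ) : ℝ) ≤ x),
          (2 * p.1 : ℝ))
      = ∑ m ∈ Finset.Icc 1 ⌊x⌋₊, (2*m : ℝ) * (⌊(x + m - m^2) / (2*m)⌋₊ : ℝ) := by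
    rw [Finset.sum_filter, Finset.sum_product]
    refine Finset.sum_congr rfl fun m hm => ?_
    have hm1 : 1 ≤ m := (Finset.mem_Icc.mp hm).1
    have hbeta : ∀ a ∈ Finset.range (⌊x⌋₊ + 1),
        (if (((((m,a).1 : ℕ) ^ 2 + (m,a).1 * (2 * (m,a).2 + 1) : ℕ)):ℝ) ≤ x
          then (2 * ((m,a).1 : ℕ) : ℝ) else 0)
        = (if (((m ^ 2 + m * (2 * a + 1) : ℕ)):ℝ) ≤ x then (2*(m:ℕ) : ℝ) else 0) :=
      fun a _ => rfl
    rw [Finset.sum_congr rfl hbeta, ← Finset.sum_filter, Finset.sum_const,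
      count_inner x hx1 m hm1, nsmul_eq_mul]
    ring
  -- Step 2: restrict to m ≤ K
  have hKle : K ≤ ⌊x⌋₊ := Nat.floor_mono (by
    nlinarith [Real.sqrt_nonneg x, Real.sq_sqrt hx0])
  have hsub : Finset.Icc 1 K ⊆ Finset.Icc 1 ⌊x⌋₊ := by
    intro m hm; rw [Finset.mem_Icc] at *; omega
  have hrestrict : ∑ m ∈ Finset.Icc 1 ⌊x⌋₊, (2*m : ℝ) * (⌊(x + m - m^2) / (2*m)⌋₊ : ℝ)
      = ∑ m ∈ Finset.Icc 1 K, (2*m : ℝ) * (⌊(x + m - m^2) / (2*m)⌋₊ : ℝ) := by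
    refine (Finset.sum_subset hsub fun m hm hmK => ?_).symm
    have hm1 : 1 ≤ m := (Finset.mem_Icc.mp hm).1
    have hmgtK : K < m := by
      rw [Finset.mem_Icc] at hm hmK; omega
    have hsm : s < m := by
      have := (Nat.floor_lt hsnn).mp hmgtK
      exact this
    have hxm : x < (m:ℝ)^2 := by nlinarith
    have hm0 : (0:ℝ) < 2*m := by positivity
    have : (x + m - m^2) / (2*m) < 1 := by
      rw [div_lt_one hm0]
      have : (1:ℝ) ≤ m := by exact_mod_cast hm1
      nlinarith
    rw [Nat.floor_eq_zero.mpr this]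
    simp
  -- Step 3: per-term evaluation for m ≤ K
  have hterm : ∀ m ∈ Finset.Icc 1 K, (2*m : ℝ) * (⌊(x + m - m^2) / (2*m)⌋₊ : ℝ)
      = x + m - m^2 - 2*m * Int.fract (x / (2 * m) - m / 2 + 1/2) := by
    intro m hm
    rw [Finset.mem_Icc] at hm
    have hm1 : (1:ℝ) ≤ m := by exact_mod_cast hm.1
    have hmK : (m:ℝ) ≤ s := le_trans (by exact_mod_cast hm.2) hkle
    have hm2x : (m:ℝ)^2 ≤ x := by nlinarith
    have hm0 : (0:ℝ) < 2*m := by linarith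
    have hv0 : 0 ≤ (x + m - m^2) / (2*m) := by
      apply div_nonneg _ (le_of_lt hm0); linarith
    have harg : (x + m - m^2) / (2*m) = x / (2 * m) - m / 2 + 1/2 := by
      field_simp; ring
    rw [natFloor_cast_real hv0, harg]
    field_simp
    ring
  rw [hN, hrestrict, Finset.sum_congr rfl hterm]
  -- Step 4: combine sums
  have hcomb : (∑ m ∈ Finset.Icc 1 K,
        (x + m - m^2 - 2*m * Int.fract (x / (2 * m) - m / 2 + 1/2))) -
      ((2/3) * x ^ ((3:ℝ)/2) - x / 2 -
        ∑ m ∈ Finset.Icc 1 K, 2 * (m : ℝ) * (Int.fract (x / (2 * m) - m / 2 + 1/2) - 1/2))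
      = (∑ m ∈ Finset.Icc 1 K, (x - (m:ℝ)^2)) - (2/3) * x ^ ((3:ℝ)/2) + x/2 := by
    have : ∀ m ∈ Finset.Icc 1 K,
        (x + m - m^2 - 2*m * Int.fract (x / (2 * m) - m / 2 + 1/2))
          + 2 * (m : ℝ) * (Int.fract (x / (2 * m) - m / 2 + 1/2) - 1/2)
        = x - (m:ℝ)^2 := by
      intro m _; ring
    have h2 : ∑ m ∈ Finset.Icc 1 K, (x - (m:ℝ)^2)
        = (∑ m ∈ Finset.Icc 1 K,
            (x + m - m^2 - 2*m * Int.fract (x / (2 * m) - m / 2 + 1/2)))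
          + ∑ m ∈ Finset.Icc 1 K,
              2 * (m : ℝ) * (Int.fract (x / (2 * m) - m / 2 + 1/2) - 1/2) := by
      rw [← Finset.sum_add_distrib]
      exact (Finset.sum_congr rfl this).symm
    linarith [h2]
  rw [hcomb]
  have hS3 : ∑ m ∈ Finset.Icc 1 K, (x - (m:ℝ)^2)
      = K * x - K*(K+1)*(2*K+1)/6 := by
    rw [Finset.sum_sub_distrib, sum_sq_Icc, Finset.sum_const, Nat.card_Icc]
    simp [nsmul_eq_mul]
  have hrpow : x ^ ((3:ℝ)/2) = s^3 := by
    rw [hs, Real.sqrt_eq_rpow, ← Real.rpow_natCast (x ^ ((1:ℝ)/2)) 3, ← Real.rpow_mul hx0]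
    norm_num
  rw [hS3, hrpow, one_mul]
  have hx2 : x = s^2 := hs2.symm
  rw [hx2, abs_le]
  constructor <;>
    nlinarith [mul_nonneg (sub_nonneg.mpr hkle) (by linarith : (0:ℝ) ≤ (K:ℝ)+1-s),
      mul_nonneg (mul_nonneg (by linarith : (0:ℝ) ≤ s) (sub_nonneg.mpr hkle))
        (by linarith : (0:ℝ) ≤ (K:ℝ)+1-s),
      sq_nonneg (s-(K:ℝ)), sq_nonneg ((K:ℝ)+1-s)]
end
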